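/- arXiv:1303.2828 — 7 statements merged into one kernel-verified Lean document; each statement's English description precedes it below -/
import Mathlib

section
/- Every at most countable complete linear order is Boolean; that is, if L is an at most countable linear order in which every subset has a supremum and an infimum, then for all x, y ∈ L with x < y there exist a, b ∈ L with x ≤ a < b ≤ y and no element strictly between a and b. -/
open Set

/-- `A ⊆ X` is a copy of `⟨X,r⟩`: the range of a self-embedding of the relation `r`,
i.e. `A` with the induced order is order-isomorphic to `⟨X,r⟩`. -/
def IsCopy {X : Type*} (r : X → X → Prop) (A : Set X) : Prop :=
  ∃ f : X → X, Function.Injective f ∧ Set.range f = A ∧ ∀ x y, r x y ↔ r (f x) (f y)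

/-- The family `P(X)` of copies of `⟨X,r⟩`. -/
def Copies {X : Type*} (r : X → X → Prop) : Set (Set X) :=
  {A | IsCopy r A}

/-- `C` is a maximal chain in the family `S`, ordered by inclusion. -/
def IsMaxChainIn {X : Type*} (S : Set (Set X)) (C : Set (Set X)) : Prop :=
  C ⊆ S ∧ IsChain (· ⊆ ·) C ∧
    ∀ C' : Set (Set X), C' ⊆ S → IsChain (· ⊆ ·) C' → C ⊆ C' → C' = C

/-- A linear order is complete iff every subset has a supremum and an infimum. -/
def CompleteLO (L : Type*) [LinearOrder L] : Prop :=
  ∀ S : Set L, (∃ a, IsLUB S a) ∧ (∃ b, IsGLB S b)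

/-- `L` embeds into the reals by a strictly increasing map. -/
def REmbeddable (L : Type*) [LinearOrder L] : Prop :=
  ∃ f : L → ℝ, StrictMono f

/-- `L` has a minimum `0_L` which is non-isolated. -/
def BotNonIsolated (L : Type*) [LinearOrder L] : Prop :=
  ∃ z : L, IsBot z ∧ ∀ x, z < x → ∃ y, z < y ∧ y < x

/-- `L` has dense jumps. -/
def DenseJumps (L : Type*) [LinearOrder L] : Prop :=
  ∀ x y : L, x < y → ∃ a b : L, x ≤ a ∧ a < b ∧ b ≤ y ∧ ∀ c, ¬ (a < c ∧ c < b)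

/-- A linear order is Boolean iff it is complete and has dense jumps. -/
def BooleanLO (L : Type*) [LinearOrder L] : Prop :=
  CompleteLO L ∧ DenseJumps L

/-- Every isomorphism between finite suborders of `⟨X,r⟩` extends to an automorphism
of `⟨X,r⟩`. -/
def UltrahomogeneousRel {X : Type*} (r : X → X → Prop) : Prop :=
  ∀ (A : Set X) (f : X → X), A.Finite → Set.InjOn f A →
    (∀ x ∈ A, ∀ y ∈ A, (r x y ↔ r (f x) (f y))) →
    ∃ g : X ≃ X, (∀ x y, r x y ↔ r (g x) (g y)) ∧ ∀ x ∈ A, g x = f x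

/-- `⟨D,r⟩` is a strict partial order with the extension property defining the
countable random poset. -/
def IsRandomPosetRel {D : Type*} (r : D → D → Prop) : Prop :=
  (∀ x, ¬ r x x) ∧ (∀ x y z, r x y → r y z → r x z) ∧
    ∀ L G U : Finset D, Disjoint L G → Disjoint L U → Disjoint G U →
      (∀ l ∈ L, ∀ g ∈ G, r l g) →
      (∀ u ∈ U, ∀ l ∈ L, ¬ r u l) →
      (∀ u ∈ U, ∀ g ∈ G, ¬ r g u) →
      ∃ p : D, p ∉ L ∧ p ∉ G ∧ p ∉ U ∧ (∀ l ∈ L, r l p) ∧ (∀ g ∈ G, r p g) ∧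
        ∀ u ∈ U, p ≠ u ∧ ¬ r p u ∧ ¬ r u p

/-- A positive family of subsets of `D`. -/
def IsPositiveFamily {D : Type*} (P : Set (Set D)) : Prop :=
  ∅ ∉ P ∧ (∀ A B : Set D, A ∈ P → A ⊆ B → B ∈ P) ∧
    (∀ A ∈ P, ∀ F : Set D, F.Finite → A \ F ∈ P) ∧
    ∃ A ∈ P, Aᶜ.Infinite

/-- Isomorphism of binary relational structures. -/
def RelIsoRel {X Y : Type*} (r : X → X → Prop) (s : Y → Y → Prop) : Prop :=
  ∃ e : X ≃ Y, ∀ x y, r x y ↔ s (e x) (e y)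

theorem statement_4 (L : Type*) [LinearOrder L] [Countable L] (h : CompleteLO L) :
    DenseJumps L := by
  intro x y hxy
  by_contra hcon
  push_neg at hcon
  have dens : ∀ a b : L, x ≤ a → a < b → b ≤ y → ∃ c, a < c ∧ c < b := by
    intro a b ha hab hb
    obtain ⟨c, hc⟩ := hcon a b ha hab hb
    exact ⟨c, hc⟩
  haveI : Nonempty L := ⟨x⟩
  obtain ⟨e, he⟩ := exists_surjective_nat L
  have key : ∀ (n : ℕ) (p : {p : L × L // x ≤ p.1 ∧ p.1 < p.2 ∧ p.2 ≤ y}),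
      ∃ q : {p : L × L // x ≤ p.1 ∧ p.1 < p.2 ∧ p.2 ≤ y},
        p.1.1 < q.1.1 ∧ q.1.2 < p.1.2 ∧ (e n < q.1.1 ∨ q.1.2 < e n) := by
    rintro n ⟨⟨a, b⟩, ha, hab, hb⟩
    simp only at ha hab hb ⊢
    obtain ⟨m, ham, hmb⟩ := dens a b ha hab hb
    have hmy : m ≤ y := (hmb.trans_le hb).le
    have hxm : x ≤ m := ha.trans ham.le
    obtain ⟨u, hau, hum⟩ := dens a m ha ham hmy
    obtain ⟨v, huv, hvm⟩ := dens u m (ha.trans hau.le) hum hmy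
    obtain ⟨w, hmw, hwb⟩ := dens m b hxm hmb hb
    obtain ⟨z, hwz, hzb⟩ := dens w b (hxm.trans hmw.le) hwb hb
    rcases le_or_gt (e n) v with ht | ht
    · exact ⟨⟨(w, z), hxm.trans hmw.le, hwz, (hzb.trans_le hb).le⟩,
        ham.trans hmw, hzb, Or.inl (ht.trans_lt (hvm.trans hmw))⟩
    · exact ⟨⟨(u, v), ha.trans hau.le, huv, ((hvm.trans hmb).trans_le hb).le⟩,
        hau, hvm.trans hmb, Or.inr ht⟩
  choose step hstep1 hstep2 hstep3 using key
  have h0 : x ≤ (x, y).1 ∧ (x, y).1 < (x, y).2 ∧ (x, y).2 ≤ y := ⟨le_refl x, hxy, le_refl y⟩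
  set f : ℕ → {p : L × L // x ≤ p.1 ∧ p.1 < p.2 ∧ p.2 ≤ y} :=
    fun n => Nat.rec ⟨(x, y), h0⟩ (fun n p => step n p) n with hf
  have hfs : ∀ n, f (n + 1) = step n (f n) := fun n => rfl
  set a : ℕ → L := fun n => (f n).1.1 with ha
  set b : ℕ → L := fun n => (f n).1.2 with hb
  have hmono : StrictMono a := by
    apply strictMono_nat_of_lt_succ
    intro n
    have := hstep1 n (f n)
    rwa [← hfs n] at this
  have hanti : StrictAnti b := by
    apply strictAnti_nat_of_succ_lt
    intro n
    have := hstep2 n (f n)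
    rwa [← hfs n] at this
  have hab : ∀ n, a n < b n := fun n => (f n).2.2.1
  have haleb : ∀ k m, a k ≤ b m := by
    intro k m
    calc a k ≤ a (max k m) := hmono.monotone (le_max_left k m)
    _ ≤ b (max k m) := (hab _).le
    _ ≤ b m := hanti.antitone (le_max_right k m)
  obtain ⟨s, hs⟩ := (h (Set.range a)).1
  have hsa : ∀ n, a n ≤ s := fun n => hs.1 ⟨n, rfl⟩
  have hsb : ∀ n, s ≤ b n := fun n => hs.2 (fun t ⟨k, hk⟩ => hk ▸ haleb k n)
  obtain ⟨n, hn⟩ := he s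
  have := hstep3 n (f n)
  rw [← hfs n] at this
  rcases this with h1 | h1
  · exact absurd (hn ▸ h1) (not_lt.mpr (hsa (n + 1)))
  · exact absurd (hn ▸ h1) (not_lt.mpr (hsb (n + 1)))
end

section
/- Let 𝓛 be a relational first-order language (no function or constant symbols) with at most countably many relation symbols, let M be a countably infinite ultrahomogeneous 𝓛-structure, and suppose P(M) ≠ {M}. Then every maximal chain ℒ in the poset ⟨P(M) ∪ {∅}, ⊆⟩, regarded as a linear order under ⊆, is ℝ-embeddable, complete, and its minimum ∅ is non-isolated in ℒ. -/
open Set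

open FirstOrder

section KurilicProof

open FirstOrder FirstOrder.Language FirstOrder.Language.Substructure

section Helpers

variable {𝓛 : FirstOrder.Language} {M : Type*} [𝓛.Structure M]

/-- In a relational language, any subset is a substructure. -/
def setSub (hfun : ∀ n, IsEmpty (𝓛.Functions n)) (A : Set M) : 𝓛.Substructure M where
  carrier := A
  fun_mem := fun {n} f => ((hfun n).elim f)

@[simp] lemma setSub_coe (hfun : ∀ n, IsEmpty (𝓛.Functions n)) (A : Set M) :
    ((setSub hfun A : 𝓛.Substructure M) : Set M) = A := rfl

lemma closure_coe_rel (hfun : ∀ n, IsEmpty (𝓛.Functions n)) (A : Set M) :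
    ((Substructure.closure 𝓛 A : 𝓛.Substructure M) : Set M) = A := by
  apply subset_antisymm
  · exact (Substructure.closure_le (S := setSub hfun A)).2 (le_refl A)
  · exact Substructure.subset_closure

lemma fg_finite_rel (hfun : ∀ n, IsEmpty (𝓛.Functions n)) {S : 𝓛.Substructure M}
    (h : S.FG) : (S : Set M).Finite := by
  obtain ⟨t, ht⟩ := h
  rw [← ht, closure_coe_rel hfun]
  exact t.finite_toSet

lemma chain_finite_subset {S : Set (Set M)} (hc : IsChain (· ⊆ ·) S) (hne : S.Nonempty)
    {F : Set M} (hF : F.Finite) (hsub : F ⊆ ⋃₀ S) : ∃ A ∈ S, F ⊆ A := by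
  refine Set.Finite.induction_on (motive := fun F _ => F ⊆ ⋃₀ S → ∃ A ∈ S, F ⊆ A) F hF
    (fun _ => ⟨hne.choose, hne.choose_spec, empty_subset _⟩) ?_ hsub
  intro x F hxF hFfin ih hsub'
  obtain ⟨A, hA, hFA⟩ := ih ((subset_insert x F).trans hsub')
  obtain ⟨B, hB, hxB⟩ := hsub' (mem_insert x F)
  rcases hc.total hA hB with h | h
  · exact ⟨B, hB, insert_subset hxB (hFA.trans h)⟩
  · exact ⟨A, hA, insert_subset (h hxB) hFA⟩

end Helpers

section Main

variable {𝓛 : FirstOrder.Language} {M : Type*} [𝓛.Structure M]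

/-- Bottom partial equivalence between `M` and a substructure of `M`, relational language. -/
noncomputable def botEquivSub (hfun : ∀ n, IsEmpty (𝓛.Functions n)) (T : 𝓛.Substructure M) :
    (⊥ : 𝓛.Substructure M) ≃[𝓛] (⊥ : 𝓛.Substructure T) := by
  haveI : IsEmpty 𝓛.Constants := hfun 0
  refine ⟨Equiv.equivOfIsEmpty _ _, ?_, ?_⟩
  · intro n f x; exact ((hfun n).elim f)
  · intro n r x
    cases n with
    | zero =>
      haveI : Unique (Fin 0 → M) := Pi.uniqueOfIsEmpty _
      show Structure.RelMap (L := 𝓛) (M := M) r _ ↔ Structure.RelMap (L := 𝓛) (M := M) r _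
      exact iff_of_eq (congrArg _ (Subsingleton.elim _ _))
    | succ n => exact isEmptyElim (x 0)

theorem union_chain_copy (hfun : ∀ n, IsEmpty (𝓛.Functions n)) [Countable M]
    (hultra : 𝓛.IsUltrahomogeneous M)
    {S : Set (Set M)} (hS : ∀ A ∈ S, ∃ f : M ↪[𝓛] M, Set.range f = A)
    (hchain : IsChain (· ⊆ ·) S) (hne : S.Nonempty) :
    ∃ f : M ↪[𝓛] M, Set.range f = ⋃₀ S := by
  classical
  set U : Set M := ⋃₀ S with hU
  set NSub : 𝓛.Substructure M := setSub hfun U with hNSub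
  -- Goal A : extension pair M N
  have extA : 𝓛.IsExtensionPair M NSub := by
    rw [isExtensionPair_iff_exists_embedding_closure_singleton_sup]
    intro T T_fg f m
    -- image of f, as a subset of M, is finite and contained in U
    have hTfin : (T : Set M).Finite := fg_finite_rel hfun T_fg
    haveI : Finite T := hTfin.to_subtype
    have himfin : (Set.range fun x : T => (f x : M)).Finite := Set.finite_range _
    have himU : (Set.range fun x : T => (f x : M)) ⊆ U := by
      rintro _ ⟨x, rfl⟩; exact (f x).2
    obtain ⟨A, hAS, himA⟩ := chain_finite_subset hchain hne himfin himU
    obtain ⟨fA, hfA⟩ := hS A hAS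
    -- iso M ≃ setSub A
    have hArange : fA.toHom.range = setSub hfun A := by
      ext x
      simp only [Hom.mem_range, Embedding.coe_toHom]
      constructor
      · rintro ⟨y, rfl⟩; rw [← hfA]; exact ⟨y, rfl⟩
      · intro hx; rw [← hfA] at hx; obtain ⟨y, hy⟩ := hx; exact ⟨y, hy⟩
    let eA : M ≃[𝓛] (setSub hfun A : 𝓛.Substructure M) := hArange ▸ fA.equivRange
    -- f restricted into setSub A
    have hfmemA : ∀ x : T, (f x : M) ∈ setSub hfun A := fun x => himA ⟨x, rfl⟩
    let f₂ : T ↪[𝓛] (setSub hfun A : 𝓛.Substructure M) :=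
      FirstOrder.Language.Embedding.codRestrict _ (NSub.subtype.comp f) hfmemA
    let f₃ : T ↪[𝓛] M := eA.symm.toEmbedding.comp f₂
    obtain ⟨f', hf'⟩ := hultra.extend_embedding (T.fg_iff_structure_fg.1 T_fg)
      (T := (Substructure.closure 𝓛 {m} ⊔ T : 𝓛.Substructure M))
      (h := ⟨Substructure.subtype _⟩) f₃ (Substructure.inclusion le_sup_right)
    have hAU : (setSub hfun A : 𝓛.Substructure M) ≤ NSub := fun x hx =>
      Set.mem_sUnion.2 ⟨A, hAS, hx⟩
    refine ⟨(Substructure.inclusion hAU).comp (eA.toEmbedding.comp f'), ?_⟩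
    ext x
    have hx3 : f₃ x = f' (Substructure.inclusion le_sup_right x) := by
      rw [hf']; rfl
    have : eA (f₃ x) = f₂ x := by
      show eA (eA.symm (f₂ x)) = f₂ x
      exact eA.apply_symm_apply _
    show (f x : M) = ((eA (f' (Substructure.inclusion le_sup_right x))) : M)
    rw [← hx3, this]
    rfl
  -- Goal B : extension pair N M
  have extB : 𝓛.IsExtensionPair (↥NSub) M := by
    rw [isExtensionPair_iff_exists_embedding_closure_singleton_sup]
    intro T T_fg f n
    let j : ↥NSub ↪[𝓛] M := NSub.subtype
    have T'_fg : (T.map j.toHom).FG := T_fg.map j.toHom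
    let eT : T ≃[𝓛] (T.map j.toHom) := j.substructureEquivMap T
    let f₃ : (T.map j.toHom) ↪[𝓛] M := f.comp eT.symm.toEmbedding
    obtain ⟨f', hf'⟩ := hultra.extend_embedding ((T.map j.toHom).fg_iff_structure_fg.1 T'_fg)
      (T := (Substructure.closure 𝓛 {(n : M)} ⊔ T.map j.toHom : 𝓛.Substructure M))
      (h := ⟨Substructure.subtype _⟩) f₃ (Substructure.inclusion le_sup_right)
    have hW : (Substructure.closure 𝓛 {n} ⊔ T).map j.toHom ≤
        Substructure.closure 𝓛 {(n : M)} ⊔ T.map j.toHom := by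
      rw [Substructure.map_sup, Substructure.map_closure]
      apply sup_le_sup_right
      apply Substructure.closure_mono
      simp only [Set.image_singleton, Set.singleton_subset_iff, Set.mem_singleton_iff]
      rfl
    let e₁ := (Substructure.inclusion hW).comp
      (j.substructureEquivMap (Substructure.closure 𝓛 {n} ⊔ T)).toEmbedding
    refine ⟨f'.comp e₁, ?_⟩
    ext x
    have h1 : e₁ (Substructure.inclusion le_sup_right x) =
        Substructure.inclusion le_sup_right (eT x) := by
      apply Subtype.ext
      rfl
    have h2 : f x = f₃ (eT x) := by
      show f x = f (eT.symm (eT x))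
      rw [eT.symm_apply_apply]
    show f x = f' (e₁ (Substructure.inclusion le_sup_right x))
    rw [h1, h2, hf']
    rfl
  -- the equivalence
  haveI : Countable ↥NSub := Subtype.countable
  obtain ⟨e, -⟩ := equiv_between_cg (Structure.cg_of_countable) (Structure.cg_of_countable)
    ⟨⟨⊥, ⊥, botEquivSub hfun NSub⟩, Substructure.fg_bot⟩ extA extB
  refine ⟨NSub.subtype.comp e.toEmbedding, ?_⟩
  have : Set.range (NSub.subtype.comp e.toEmbedding) = Subtype.val '' (Set.range e) := by
    ext x; simp [Set.range_comp]
    exact ⟨fun ⟨y, hy⟩ => hy ▸ (e y).2, fun hx => ⟨e.symm ⟨x, hx⟩, by simp⟩⟩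
  rw [this, Set.range_eq_univ.2 e.surjective, Set.image_univ, Subtype.range_coe]
  rfl

end Main


theorem statement_6 (𝓛 : FirstOrder.Language) (hfun : ∀ n, IsEmpty (𝓛.Functions n))
    (hcount : Countable (Σ n, 𝓛.Relations n))
    (M : Type*) [𝓛.Structure M] [Countable M] [Infinite M]
    (hultra : 𝓛.IsUltrahomogeneous M)
    (hne : {A : Set M | ∃ f : M ↪[𝓛] M, Set.range f = A} ≠ {Set.univ})
    (C : Set (Set M))
    (hmax : IsMaxChainIn ({A : Set M | ∃ f : M ↪[𝓛] M, Set.range f = A} ∪ {∅}) C) :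
    (∃ f : ↥C → ℝ, StrictMono f) ∧
    (∀ S : Set ↥C, (∃ a, IsLUB S a) ∧ (∃ b, IsGLB S b)) ∧
    (∅ : Set M) ∈ C ∧
    (∀ A ∈ C, (∅ : Set M) ⊂ A → ∃ B ∈ C, (∅ : Set M) ⊂ B ∧ B ⊂ A) := by
  classical
  set P : Set (Set M) := {A : Set M | ∃ f : M ↪[𝓛] M, Set.range f = A} with hP
  obtain ⟨hsub, hchain, hmaxi⟩ := hmax
  -- step 0
  have step0 : ∀ B ∈ P ∪ {∅}, (∀ D ∈ C, B ⊆ D ∨ D ⊆ B) → B ∈ C := by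
    intro B hBF hcomp
    have : insert B C = C := by
      apply hmaxi _ (insert_subset hBF hsub) _ (subset_insert _ _)
      intro x hx y hy hxy
      rcases hx with rfl | hx
      · rcases hy with rfl | hy
        · exact absurd rfl hxy
        · exact hcomp y hy
      · rcases hy with rfl | hy
        · exact (hcomp x hx).symm
        · exact hchain hx hy hxy
    rw [← this]; exact mem_insert _ _
  -- members of P are nonempty
  have hPne : ∀ A ∈ P, A.Nonempty := by
    rintro A ⟨f, rfl⟩
    exact (Set.range_nonempty f)
  -- step 1
  have hempty : (∅ : Set M) ∈ C :=
    step0 ∅ (Or.inr rfl) (fun D _ => Or.inl (empty_subset D))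
  -- step 2 : closure under unions of subfamilies
  have step2 : ∀ T : Set (Set M), T ⊆ C → ⋃₀ T ∈ C := by
    intro T hTC
    have hUF : ⋃₀ T ∈ P ∪ {∅} := by
      by_cases hT0 : T ⊆ {∅}
      · right
        simp only [mem_singleton_iff]
        apply eq_empty_iff_forall_notMem.2
        rintro x ⟨A, hA, hxA⟩
        rw [hT0 hA] at hxA
        exact hxA
      · left
        obtain ⟨A₀, hA₀T, hA₀ne⟩ := not_subset.mp hT0
        have hT' : {A ∈ T | A ≠ ∅} ⊆ P := by
          rintro A ⟨hAT, hAne⟩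
          rcases hsub (hTC hAT) with h | h
          · exact h
          · exact absurd h hAne
        have hUeq : ⋃₀ {A ∈ T | A ≠ ∅} = ⋃₀ T := by
          apply subset_antisymm (sUnion_subset_sUnion (fun A hA => hA.1))
          rintro x ⟨A, hA, hxA⟩
          refine ⟨A, ⟨hA, ?_⟩, hxA⟩
          rintro rfl; exact hxA
        rw [← hUeq]
        exact union_chain_copy hfun hultra hT'
          ((hchain.mono hTC).mono (fun A hA => hA.1))
          ⟨A₀, hA₀T, fun h => hA₀ne (mem_singleton_iff.2 h)⟩
    refine step0 _ hUF ?_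
    intro D hD
    by_cases hall : ∀ A ∈ T, A ⊆ D
    · exact Or.inl (sUnion_subset hall)
    · push_neg at hall
      obtain ⟨A, hAT, hAD⟩ := hall
      rcases hchain.total (hTC hAT) hD with h | h
      · exact absurd h hAD
      · exact Or.inr (h.trans (subset_sUnion_of_mem hAT))
  -- LUBs
  have lub : ∀ S : Set ↥C, ∃ a, IsLUB S a := by
    intro S
    have hm : ⋃₀ (Subtype.val '' S) ∈ C := step2 _ (by rintro A ⟨⟨B, hB⟩, _, rfl⟩; exact hB)
    refine ⟨⟨_, hm⟩, ?_, ?_⟩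
    · intro x hx
      exact subset_sUnion_of_mem (mem_image_of_mem _ hx)
    · intro b hb
      show ⋃₀ (Subtype.val '' S) ⊆ (b : Set M)
      apply sUnion_subset
      rintro A ⟨x, hx, rfl⟩
      exact hb hx
  refine ⟨?_, fun S => ⟨lub S, ?_⟩, hempty, ?_⟩
  -- ℝ-embedding
  · obtain ⟨e, he⟩ := (countable_iff_exists_injective M).mp ‹_›
    refine ⟨fun A => ∑' k : ℕ, Set.indicator (e '' (A : Set M)) (fun k => (1/2 : ℝ)^k) k, ?_⟩
    intro A B hAB
    have hss : (A : Set M) ⊂ (B : Set M) := hAB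
    obtain ⟨z, hzB, hzA⟩ := exists_of_ssubset hss
    refine Summable.tsum_lt_tsum_of_nonneg (i := e z) ?_ ?_ ?_ ?_
    · intro b
      exact Set.indicator_nonneg (fun k _ => by positivity) b
    · intro b
      exact Set.indicator_le_indicator_of_subset (Set.image_mono hss.subset)
        (fun k => by positivity) b
    · rw [Set.indicator_of_notMem, Set.indicator_of_mem (mem_image_of_mem e hzB)]
      · positivity
      · rintro ⟨w, hwA, hwz⟩
        exact hzA (he hwz ▸ hwA)
    · exact summable_geometric_two.indicator _
  -- GLBs
  · obtain ⟨a, ha⟩ := lub (lowerBounds S)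
    refine ⟨a, ?_, fun b hb => ha.1 hb⟩
    intro x hx
    exact ha.2 (fun y hy => hy hx)
  -- bottom non-isolated
  · intro A hAC hA
    have huniv : Set.univ ∈ P := ⟨Embedding.refl 𝓛 M, Set.range_eq_univ.2 (fun x => ⟨x, rfl⟩)⟩
    have : ∃ A₀ ∈ P, A₀ ≠ Set.univ := by
      by_contra h
      push_neg at h
      exact hne (subset_antisymm h (by rintro x rfl; exact huniv))
    obtain ⟨A₀, ⟨f₀, hf₀⟩, hA₀⟩ := this
    obtain ⟨fA, hfA⟩ : A ∈ P := by
      rcases hsub hAC with h | h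
      · exact h
      · exact absurd h (by simpa using hA.ne')
    set B : Set M := Set.range (fA.comp f₀) with hB
    have hBP : B ∈ P := ⟨fA.comp f₀, rfl⟩
    have hBA : B ⊂ A := by
      constructor
      · rintro _ ⟨x, rfl⟩
        rw [← hfA]
        exact ⟨f₀ x, rfl⟩
      · intro hsub'
        obtain ⟨w, hw⟩ : ∃ w, w ∉ A₀ := by
          by_contra h
          push_neg at h
          exact hA₀ (eq_univ_of_forall h)
        have : fA w ∈ B := hsub' (hfA ▸ ⟨w, rfl⟩)
        obtain ⟨v, hv⟩ := this
        have : f₀ v = w := fA.injective hv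
        exact hw (hf₀ ▸ ⟨v, this⟩)
    have hBne : (∅ : Set M) ⊂ B := (hPne B hBP).empty_ssubset
    by_contra hcon
    push_neg at hcon
    have hBC : B ∈ C := by
      refine step0 B (Or.inl hBP) ?_
      intro D hD
      rcases hchain.total hD hAC with h | h
      · rcases eq_or_ne D ∅ with rfl | hDne
        · exact Or.inr (empty_subset B)
        · rcases eq_or_ne D A with rfl | hDA
          · exact Or.inl hBA.subset
          · exact (hcon D hD ((Set.nonempty_iff_ne_empty.2 hDne).empty_ssubset)
              (Set.ssubset_iff_subset_ne.2 ⟨h, hDA⟩)).elim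
      · exact Or.inl (hBA.subset.trans h)
    exact hcon B hBC hBne hBA

end KurilicProof
end

section
/- Let ⟨D,<⟩ be a countable random poset. Then for every triple ⟨L,G,U⟩ ∈ C(D), the set D_{⟨L,G,U⟩}, equipped with the order induced from D, is order-isomorphic to ⟨D,<⟩; in particular D_{⟨L,G,U⟩} is infinite. -/
open Set

section BF
variable {X Y : Type*} [DecidableEq X] [DecidableEq Y] (r : X → X → Prop) (s : Y → Y → Prop)

def PIso (p : Finset (X × Y)) : Prop :=
  ∀ a b, (a, b) ∈ p → ∀ c d, (c, d) ∈ p → (a = c ↔ b = d) ∧ (r a c ↔ s b d)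

lemma piso_empty : PIso r s ∅ := by intro a b h; simp at h

lemma piso_swap {p : Finset (X × Y)} (h : PIso r s p) :
    PIso s r (p.image Prod.swap) := by
  rintro b a hba d c hdc
  simp only [Finset.mem_image, Prod.exists] at hba hdc
  obtain ⟨a', b', hab, h1⟩ := hba
  obtain ⟨c', d', hcd, h2⟩ := hdc
  rw [Prod.swap_prod_mk, Prod.mk.injEq] at h1 h2
  obtain ⟨rfl, rfl⟩ := h1
  obtain ⟨rfl, rfl⟩ := h2
  obtain ⟨h3, h4⟩ := h a' b' hab c' d' hcd
  exact ⟨h3.symm, h4.symm⟩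

lemma extend_left (hr : IsRandomPosetRel r) (hs : IsRandomPosetRel s)
    {p : Finset (X × Y)} (hp : PIso r s p) (x : X) :
    ∃ y, PIso r s (insert (x, y) p) := by
  classical
  by_cases hx : ∃ y, (x, y) ∈ p
  · obtain ⟨y, hy⟩ := hx
    exact ⟨y, by rwa [Finset.insert_eq_self.mpr hy]⟩
  push_neg at hx
  set L' := (p.filter fun q => r q.1 x).image Prod.snd with hL'
  set G' := (p.filter fun q => r x q.1).image Prod.snd with hG'
  set U' := (p.filter fun q => ¬ r q.1 x ∧ ¬ r x q.1).image Prod.snd with hU'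
  have memL' : ∀ b, b ∈ L' ↔ ∃ a, (a, b) ∈ p ∧ r a x := by
    intro b
    simp only [hL', Finset.mem_image, Finset.mem_filter, Prod.exists]
    constructor
    · rintro ⟨a, b', ⟨hm, hr'⟩, rfl⟩; exact ⟨a, hm, hr'⟩
    · rintro ⟨a, hm, hr'⟩; exact ⟨a, b, ⟨hm, hr'⟩, rfl⟩
  have memG' : ∀ b, b ∈ G' ↔ ∃ a, (a, b) ∈ p ∧ r x a := by
    intro b
    simp only [hG', Finset.mem_image, Finset.mem_filter, Prod.exists]
    constructor
    · rintro ⟨a, b', ⟨hm, hr'⟩, rfl⟩; exact ⟨a, hm, hr'⟩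
    · rintro ⟨a, hm, hr'⟩; exact ⟨a, b, ⟨hm, hr'⟩, rfl⟩
  have memU' : ∀ b, b ∈ U' ↔ ∃ a, (a, b) ∈ p ∧ ¬ r a x ∧ ¬ r x a := by
    intro b
    simp only [hU', Finset.mem_image, Finset.mem_filter, Prod.exists]
    constructor
    · rintro ⟨a, b', ⟨hm, hr'⟩, rfl⟩; exact ⟨a, hm, hr'⟩
    · rintro ⟨a, hm, hr'⟩; exact ⟨a, b, ⟨hm, hr'⟩, rfl⟩
  -- same second coordinate forces same first coordinate
  have same : ∀ a c b, (a, b) ∈ p → (c, b) ∈ p → a = c := fun a c b h1 h2 =>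
    (hp a b h1 c b h2).1.mpr rfl
  have dLG : Disjoint L' G' := by
    rw [Finset.disjoint_left]
    intro b hbL hbG
    obtain ⟨a, ha, hax⟩ := (memL' b).mp hbL
    obtain ⟨c, hc, hxc⟩ := (memG' b).mp hbG
    obtain rfl := same a c b ha hc
    exact hr.1 a (hr.2.1 a x a hax hxc)
  have dLU : Disjoint L' U' := by
    rw [Finset.disjoint_left]
    intro b hbL hbU
    obtain ⟨a, ha, hax⟩ := (memL' b).mp hbL
    obtain ⟨c, hc, hn1, hn2⟩ := (memU' b).mp hbU
    obtain rfl := same a c b ha hc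
    exact hn1 hax
  have dGU : Disjoint G' U' := by
    rw [Finset.disjoint_left]
    intro b hbG hbU
    obtain ⟨a, ha, hxa⟩ := (memG' b).mp hbG
    obtain ⟨c, hc, hn1, hn2⟩ := (memU' b).mp hbU
    obtain rfl := same a c b ha hc
    exact hn2 hxa
  have c1 : ∀ l ∈ L', ∀ g ∈ G', s l g := by
    intro l hl g hg
    obtain ⟨a, ha, hax⟩ := (memL' l).mp hl
    obtain ⟨c, hc, hxc⟩ := (memG' g).mp hg
    exact (hp a l ha c g hc).2.mp (hr.2.1 a x c hax hxc)
  have c2 : ∀ u ∈ U', ∀ l ∈ L', ¬ s u l := by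
    intro u hu l hl h
    obtain ⟨c, hc, hn1, hn2⟩ := (memU' u).mp hu
    obtain ⟨a, ha, hax⟩ := (memL' l).mp hl
    exact hn1 (hr.2.1 c a x ((hp c u hc a l ha).2.mpr h) hax)
  have c3 : ∀ u ∈ U', ∀ g ∈ G', ¬ s g u := by
    intro u hu g hg h
    obtain ⟨c, hc, hn1, hn2⟩ := (memU' u).mp hu
    obtain ⟨a, ha, hxa⟩ := (memG' g).mp hg
    exact hn2 (hr.2.1 x a c hxa ((hp a g ha c u hc).2.mpr h))
  obtain ⟨y, hyL, hyG, hyU, h1, h2, h3⟩ := hs.2.2 L' G' U' dLG dLU dGU c1 c2 c3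
  refine ⟨y, ?_⟩
  have key : ∀ c d, (c, d) ∈ p → (x = c ↔ y = d) ∧ (r x c ↔ s y d) ∧ (r c x ↔ s d y) := by
    intro c d hcd
    have hxc : x ≠ c := fun h => hx d (h ▸ hcd)
    by_cases h' : r c x
    · have hdL : d ∈ L' := (memL' d).mpr ⟨c, hcd, h'⟩
      have hsd : s d y := h1 d hdL
      have hyd : y ≠ d := fun h => hs.1 y (h ▸ hsd)
      refine ⟨iff_of_false hxc hyd, ?_, iff_of_true h' hsd⟩
      constructor
      · intro h; exact absurd (hr.2.1 c x c h' h) (hr.1 c)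
      · intro h; exact absurd (hs.2.1 y d y h hsd) (hs.1 y)
    by_cases h'' : r x c
    · have hdG : d ∈ G' := (memG' d).mpr ⟨c, hcd, h''⟩
      have hsd : s y d := h2 d hdG
      have hyd : y ≠ d := fun h => hs.1 y (h ▸ hsd)
      refine ⟨iff_of_false hxc hyd, iff_of_true h'' hsd, ?_⟩
      constructor
      · intro h; exact absurd h h'
      · intro h; exact absurd (hs.2.1 y d y hsd h) (hs.1 y)
    · have hdU : d ∈ U' := (memU' d).mpr ⟨c, hcd, h', h''⟩
      obtain ⟨hne, hn1, hn2⟩ := h3 d hdU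
      exact ⟨iff_of_false hxc hne, iff_of_false h'' hn1, iff_of_false h' hn2⟩
  intro a b hab c d hcd
  rw [Finset.mem_insert, Prod.mk.injEq] at hab hcd
  rcases hab with ⟨rfl, rfl⟩ | hab <;> rcases hcd with ⟨rfl, rfl⟩ | hcd
  · exact ⟨iff_of_true rfl rfl, iff_of_false (hr.1 _) (hs.1 _)⟩
  · exact ⟨(key c d hcd).1, (key c d hcd).2.1⟩
  · obtain ⟨k1, k2, k3⟩ := key a b hab
    exact ⟨⟨fun h => (k1.mp h.symm).symm, fun h => (k1.mpr h.symm).symm⟩, k3⟩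
  · exact hp a b hab c d hcd

lemma extend_right (hr : IsRandomPosetRel r) (hs : IsRandomPosetRel s)
    {p : Finset (X × Y)} (hp : PIso r s p) (y : Y) :
    ∃ x, PIso r s (insert (x, y) p) := by
  classical
  obtain ⟨x, hx⟩ := extend_left s r hs hr (piso_swap r s hp) y
  refine ⟨x, ?_⟩
  have h2 := piso_swap s r hx
  rwa [Finset.image_insert, Prod.swap_prod_mk, Finset.image_image,
    show (Prod.swap ∘ Prod.swap : X × Y → X × Y) = id from funext fun q => Prod.swap_swap q,
    Finset.image_id] at h2

end BF

theorem relIsoRel_of_random {X Y : Type*} [Countable X] [Infinite X] [Countable Y] [Infinite Y]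
    {r : X → X → Prop} {s : Y → Y → Prop}
    (hr : IsRandomPosetRel r) (hs : IsRandomPosetRel s) :
    ∃ e : X ≃ Y, ∀ a b, r a b ↔ s (e a) (e b) := by
  classical
  obtain ⟨eX, hEX⟩ := exists_surjective_nat X
  obtain ⟨eY, hEY⟩ := exists_surjective_nat Y
  let Q := {q : Finset (X × Y) // PIso r s q}
  let next : ℕ → Q → Q := fun n q =>
    if h : n % 2 = 0 then
      ⟨insert (eX (n / 2), Classical.choose (extend_left r s hr hs q.2 (eX (n / 2)))) q.1,
        Classical.choose_spec (extend_left r s hr hs q.2 (eX (n / 2)))⟩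
    else
      ⟨insert (Classical.choose (extend_right r s hr hs q.2 (eY (n / 2))), eY (n / 2)) q.1,
        Classical.choose_spec (extend_right r s hr hs q.2 (eY (n / 2)))⟩
  let seq : ℕ → Q := fun n => Nat.rec ⟨∅, piso_empty r s⟩ (fun n ih => next n ih) n
  have hseq : ∀ n, seq (n + 1) = next n (seq n) := fun n => rfl
  have mono1 : ∀ n, (seq n).1 ⊆ (seq (n + 1)).1 := by
    intro n
    rw [hseq]
    by_cases h : n % 2 = 0 <;> simp only [next, h, dite_true, dite_false, if_pos, if_neg,
      not_false_iff] <;> first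
      | exact Finset.subset_insert _ _
      | (rw [dif_pos h]; exact Finset.subset_insert _ _)
      | (rw [dif_neg h]; exact Finset.subset_insert _ _)
  have mono : ∀ {m n}, m ≤ n → (seq m).1 ⊆ (seq n).1 := by
    intro m n h
    induction n with
    | zero => rw [Nat.le_zero.mp h]
    | succ k ih =>
      rcases Nat.lt_or_ge m (k+1) with h' | h'
      · exact (ih (Nat.lt_succ_iff.mp h')).trans (mono1 k)
      · rw [Nat.le_antisymm h h']
  have compat : ∀ {m n : ℕ} {a c : X × Y}, a ∈ (seq m).1 → c ∈ (seq n).1 →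
      (a.1 = c.1 ↔ a.2 = c.2) ∧ (r a.1 c.1 ↔ s a.2 c.2) := by
    intro m n a c hm hn
    exact (seq (max m n)).2 a.1 a.2 (mono (le_max_left m n) hm)
      c.1 c.2 (mono (le_max_right m n) hn)
  have dom : ∀ x : X, ∃ y : Y, ∃ n, (x, y) ∈ (seq n).1 := by
    intro x
    obtain ⟨m, rfl⟩ := hEX x
    refine ⟨Classical.choose (extend_left r s hr hs (seq (2 * m)).2 (eX m)), 2 * m + 1, ?_⟩
    rw [hseq]
    have h0 : (2 * m) % 2 = 0 := by omega
    have h1 : 2 * m / 2 = m := by omega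
    simp only [next, dif_pos h0, h1]
    exact Finset.mem_insert_self _ _
  have rng : ∀ y : Y, ∃ x : X, ∃ n, (x, y) ∈ (seq n).1 := by
    intro y
    obtain ⟨m, rfl⟩ := hEY y
    refine ⟨Classical.choose (extend_right r s hr hs (seq (2 * m + 1)).2 (eY m)), 2 * m + 2, ?_⟩
    rw [hseq]
    have h0 : ¬ (2 * m + 1) % 2 = 0 := by omega
    have h1 : (2 * m + 1) / 2 = m := by omega
    simp only [next, dif_neg h0, h1]
    exact Finset.mem_insert_self _ _
  let F : X → Y := fun x => Classical.choose (dom x)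
  have hF : ∀ x, ∃ n, (x, F x) ∈ (seq n).1 := fun x => Classical.choose_spec (dom x)
  have hinj : Function.Injective F := by
    intro a b h
    obtain ⟨m, hm⟩ := hF a
    obtain ⟨n, hn⟩ := hF b
    exact (compat (m := m) (n := n) hm hn).1.mpr h
  have hsurj : Function.Surjective F := by
    intro y
    obtain ⟨x, n, hn⟩ := rng y
    obtain ⟨m, hm⟩ := hF x
    exact ⟨x, (compat (m := m) (n := n) hm hn).1.mp rfl⟩
  refine ⟨Equiv.ofBijective F ⟨hinj, hsurj⟩, ?_⟩
  intro a b
  obtain ⟨m, hm⟩ := hF a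
  obtain ⟨n, hn⟩ := hF b
  exact (compat (m := m) (n := n) hm hn).2

theorem statement_8 {D : Type*} [Countable D] [Infinite D] (r : D → D → Prop)
    (hrp : IsRandomPosetRel r)
    (L G U : Finset D) (hLG : Disjoint L G) (hLU : Disjoint L U) (hGU : Disjoint G U)
    (hC1 : ∀ l ∈ L, ∀ g ∈ G, r l g)
    (hC2 : ∀ u ∈ U, ∀ l ∈ L, ¬ r u l)
    (hC3 : ∀ u ∈ U, ∀ g ∈ G, ¬ r g u)
    (W : Set D)
    (hW : W = {p : D | p ∉ L ∧ p ∉ G ∧ p ∉ U ∧ (∀ l ∈ L, r l p) ∧ (∀ g ∈ G, r p g) ∧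
      ∀ u ∈ U, p ≠ u ∧ ¬ r p u ∧ ¬ r u p}) :
    IsCopy r W ∧ W.Infinite := by
  classical
  have hWmem : ∀ p : D, p ∈ W ↔ (p ∉ L ∧ p ∉ G ∧ p ∉ U ∧ (∀ l ∈ L, r l p) ∧
      (∀ g ∈ G, r p g) ∧ ∀ u ∈ U, p ≠ u ∧ ¬ r p u ∧ ¬ r u p) := by
    intro p; rw [hW]; rfl
  have hirr := hrp.1
  have htr := hrp.2.1
  -- W is infinite
  have hWinf : W.Infinite := by
    by_contra hni
    rw [Set.not_infinite] at hni
    have hF := hni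
    obtain ⟨p, hp1, hp2, hp3, hp4, hp5, hp6⟩ := hrp.2.2 L G (U ∪ hF.toFinset)
      hLG
      (by rw [Finset.disjoint_left]; intro a haL haU
          rcases Finset.mem_union.mp haU with h | h
          · exact Finset.disjoint_left.mp hLU haL h
          · exact ((hWmem a).mp (hF.mem_toFinset.mp h)).1 haL)
      (by rw [Finset.disjoint_left]; intro a haG haU
          rcases Finset.mem_union.mp haU with h | h
          · exact Finset.disjoint_left.mp hGU haG h
          · exact ((hWmem a).mp (hF.mem_toFinset.mp h)).2.1 haG)
      hC1
      (by intro u hu l hl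
          rcases Finset.mem_union.mp hu with h | h
          · exact hC2 u h l hl
          · intro hrul
            have hw := (hWmem u).mp (hF.mem_toFinset.mp h)
            exact hirr l (htr l u l (hw.2.2.2.1 l hl) hrul))
      (by intro u hu g hg
          rcases Finset.mem_union.mp hu with h | h
          · exact hC3 u h g hg
          · intro hrgu
            have hw := (hWmem u).mp (hF.mem_toFinset.mp h)
            exact hirr u (htr u g u (hw.2.2.2.2.1 g hg) hrgu))
    have hpW : p ∈ W := (hWmem p).mpr ⟨hp1, hp2,
      fun h => hp3 (Finset.mem_union_left _ h), hp4, hp5,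
      fun u hu => hp6 u (Finset.mem_union_left _ hu)⟩
    exact (hp6 p (Finset.mem_union_right _ (hF.mem_toFinset.mpr hpW))).1 rfl
  haveI : Infinite ↥W := hWinf.to_subtype
  -- the induced relation on W
  set s : ↥W → ↥W → Prop := fun a b => r a b with hs
  have hmemW : ∀ a : ↥W, (a : D) ∉ L ∧ (a : D) ∉ G ∧ (a : D) ∉ U ∧
      (∀ l ∈ L, r l a) ∧ (∀ g ∈ G, r (a : D) g) ∧
      ∀ u ∈ U, (a : D) ≠ u ∧ ¬ r (a : D) u ∧ ¬ r u a := fun a => (hWmem a).mp a.2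
  have hsrp : IsRandomPosetRel s := by
    refine ⟨fun a => hirr a, fun a b c => htr a b c, ?_⟩
    intro L' G' U' dLG' dLU' dGU' c1' c2' c3'
    set Li := L ∪ L'.image Subtype.val with hLi
    set Gi := G ∪ G'.image Subtype.val with hGi
    set Ui := U ∪ U'.image Subtype.val with hUi
    have memLi : ∀ a, a ∈ Li ↔ a ∈ L ∨ ∃ w ∈ L', (w : D) = a := by
      intro a; simp [hLi, Finset.mem_union, Finset.mem_image]
    have memGi : ∀ a, a ∈ Gi ↔ a ∈ G ∨ ∃ w ∈ G', (w : D) = a := by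
      intro a; simp [hGi, Finset.mem_union, Finset.mem_image]
    have memUi : ∀ a, a ∈ Ui ↔ a ∈ U ∨ ∃ w ∈ U', (w : D) = a := by
      intro a; simp [hUi, Finset.mem_union, Finset.mem_image]
    obtain ⟨p, hp1, hp2, hp3, hp4, hp5, hp6⟩ := hrp.2.2 Li Gi Ui
      (by rw [Finset.disjoint_left]; intro a ha hb
          rcases (memLi a).mp ha with h | ⟨w, hw, rfl⟩ <;>
            rcases (memGi _).mp hb with h' | ⟨w', hw', hww⟩
          · exact Finset.disjoint_left.mp hLG h h'
          · exact (hmemW w').1 (hww ▸ h)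
          · exact (hmemW w).2.1 h'
          · exact Finset.disjoint_left.mp dLG' hw (Subtype.ext hww ▸ hw')
      )
      (by rw [Finset.disjoint_left]; intro a ha hb
          rcases (memLi a).mp ha with h | ⟨w, hw, rfl⟩ <;>
            rcases (memUi _).mp hb with h' | ⟨w', hw', hww⟩
          · exact Finset.disjoint_left.mp hLU h h'
          · exact (hmemW w').1 (hww ▸ h)
          · exact (hmemW w).2.2.1 h'
          · exact Finset.disjoint_left.mp dLU' hw (Subtype.ext hww ▸ hw')
      )
      (by rw [Finset.disjoint_left]; intro a ha hb
          rcases (memGi a).mp ha with h | ⟨w, hw, rfl⟩ <;>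
            rcases (memUi _).mp hb with h' | ⟨w', hw', hww⟩
          · exact Finset.disjoint_left.mp hGU h h'
          · exact (hmemW w').2.1 (hww ▸ h)
          · exact (hmemW w).2.2.1 h'
          · exact Finset.disjoint_left.mp dGU' hw (Subtype.ext hww ▸ hw')
      )
      (by intro l hl g hg
          rcases (memLi l).mp hl with h | ⟨w, hw, rfl⟩ <;>
            rcases (memGi g).mp hg with h' | ⟨w', hw', rfl⟩
          · exact hC1 l h g h'
          · exact (hmemW w').2.2.2.1 l h
          · exact (hmemW w).2.2.2.2.1 g h'
          · exact c1' w hw w' hw')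
      (by intro u hu l hl
          rcases (memUi u).mp hu with h | ⟨w, hw, rfl⟩ <;>
            rcases (memLi l).mp hl with h' | ⟨w', hw', rfl⟩
          · exact hC2 u h l h'
          · exact ((hmemW w').2.2.2.2.2 u h).2.2
          · intro hrul
            exact hirr l (htr l w l ((hmemW w).2.2.2.1 l h') hrul)
          · exact c2' w hw w' hw')
      (by intro u hu g hg
          rcases (memUi u).mp hu with h | ⟨w, hw, rfl⟩ <;>
            rcases (memGi g).mp hg with h' | ⟨w', hw', rfl⟩
          · exact hC3 u h g h'
          · exact ((hmemW w').2.2.2.2.2 u h).2.1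
          · intro hrgu
            exact hirr w (htr w g w ((hmemW w).2.2.2.2.1 g h') hrgu)
          · exact c3' w hw w' hw')
    have hpW : p ∈ W := (hWmem p).mpr
      ⟨fun h => hp1 (Finset.mem_union_left _ h),
       fun h => hp2 (Finset.mem_union_left _ h),
       fun h => hp3 (Finset.mem_union_left _ h),
       fun l hl => hp4 l (Finset.mem_union_left _ hl),
       fun g hg => hp5 g (Finset.mem_union_left _ hg),
       fun u hu => hp6 u (Finset.mem_union_left _ hu)⟩
    refine ⟨⟨p, hpW⟩, ?_, ?_, ?_, ?_, ?_, ?_⟩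
    · intro h
      exact hp1 (Finset.mem_union_right _ (Finset.mem_image_of_mem _ h))
    · intro h
      exact hp2 (Finset.mem_union_right _ (Finset.mem_image_of_mem _ h))
    · intro h
      exact hp3 (Finset.mem_union_right _ (Finset.mem_image_of_mem _ h))
    · intro l hl
      exact hp4 l (Finset.mem_union_right _ (Finset.mem_image_of_mem _ hl))
    · intro g hg
      exact hp5 g (Finset.mem_union_right _ (Finset.mem_image_of_mem _ hg))
    · intro u hu
      obtain ⟨h1, h2, h3⟩ := hp6 u (Finset.mem_union_right _ (Finset.mem_image_of_mem _ hu))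
      exact ⟨fun h => h1 (congrArg Subtype.val h), h2, h3⟩
  obtain ⟨e, he⟩ := relIsoRel_of_random hrp hsrp
  refine ⟨⟨fun x => (e x : D), ?_, ?_, ?_⟩, hWinf⟩
  · intro a b h
    exact e.injective (Subtype.ext h)
  · ext y
    constructor
    · rintro ⟨x, rfl⟩
      exact (e x).2
    · intro hy
      exact ⟨e.symm ⟨y, hy⟩, by simp⟩
  · exact he
end

section
/- Let ⟨D,<⟩ be a countable random poset. Then for every finite set F ⊆ D, the set D \ F, equipped with the order induced from D, is order-isomorphic to ⟨D,<⟩. -/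
open Set

open scoped Classical

section BF
variable {D E : Type*}

def BFGood (r : D → D → Prop) (s : E → E → Prop) (P : Finset (D × E)) : Prop :=
  ∀ p ∈ P, ∀ q ∈ P, (p.1 = q.1 ↔ p.2 = q.2) ∧ (r p.1 q.1 ↔ s p.2 q.2)

lemma bfgood_swap {r : D → D → Prop} {s : E → E → Prop} {P : Finset (D × E)}
    (h : BFGood r s P) : BFGood s r (P.image Prod.swap) := by
  intro p hp q hq
  simp only [Finset.mem_image] at hp hq
  obtain ⟨p', hp', rfl⟩ := hp
  obtain ⟨q', hq', rfl⟩ := hq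
  obtain ⟨h1, h2⟩ := h p' hp' q' hq'
  exact ⟨h1.symm, h2.symm⟩

lemma bf_extend_right (r : D → D → Prop) (s : E → E → Prop)
    (hr : ∀ x, ¬ r x x) (htr : ∀ x y z, r x y → r y z → r x z)
    (hs : IsRandomPosetRel s)
    (P : Finset (D × E)) (hP : BFGood r s P) (d : D) :
    ∃ b : E, BFGood r s (insert (d, b) P) := by
  classical
  by_cases hd : ∃ q ∈ P, q.1 = d
  · obtain ⟨q, hq, hq1⟩ := hd
    refine ⟨q.2, ?_⟩
    have hqe : (d, q.2) = q := by rw [← hq1]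
    rw [hqe, Finset.insert_eq_self.mpr hq]
    exact hP
  · push_neg at hd
    set L := (P.filter (fun q => r q.1 d)).image Prod.snd with hL
    set G := (P.filter (fun q => r d q.1)).image Prod.snd with hG
    set U := (P.filter (fun q => ¬ r q.1 d ∧ ¬ r d q.1)).image Prod.snd with hU
    -- functionality of snd
    have func : ∀ q ∈ P, ∀ q' ∈ P, q.2 = q'.2 → q.1 = q'.1 := by
      intro q hq q' hq' h
      exact (hP q hq q' hq').1.mpr h
    have memL : ∀ q ∈ P, (q.2 ∈ L ↔ r q.1 d) := by
      intro q hq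
      constructor
      · intro h
        simp only [hL, Finset.mem_image, Finset.mem_filter] at h
        obtain ⟨q', ⟨hq', hr'⟩, he⟩ := h
        rwa [func q' hq' q hq he] at hr'
      · intro h
        exact Finset.mem_image_of_mem _ (Finset.mem_filter.mpr ⟨hq, h⟩)
    have memG : ∀ q ∈ P, (q.2 ∈ G ↔ r d q.1) := by
      intro q hq
      constructor
      · intro h
        simp only [hG, Finset.mem_image, Finset.mem_filter] at h
        obtain ⟨q', ⟨hq', hr'⟩, he⟩ := h
        rwa [func q' hq' q hq he] at hr'
      · intro h
        exact Finset.mem_image_of_mem _ (Finset.mem_filter.mpr ⟨hq, h⟩)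
    have memU : ∀ q ∈ P, (q.2 ∈ U ↔ (¬ r q.1 d ∧ ¬ r d q.1)) := by
      intro q hq
      constructor
      · intro h
        simp only [hU, Finset.mem_image, Finset.mem_filter] at h
        obtain ⟨q', ⟨hq', hr'⟩, he⟩ := h
        rwa [func q' hq' q hq he] at hr'
      · intro h
        exact Finset.mem_image_of_mem _ (Finset.mem_filter.mpr ⟨hq, h⟩)
    have inP : ∀ b, b ∈ L ∨ b ∈ G ∨ b ∈ U → ∃ q ∈ P, q.2 = b := by
      intro b h
      rcases h with h | h | h <;>
      · simp only [hL, hG, hU, Finset.mem_image, Finset.mem_filter] at h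
        obtain ⟨q, ⟨hq, _⟩, he⟩ := h
        exact ⟨q, hq, he⟩
    have dLG : Disjoint L G := by
      rw [Finset.disjoint_left]
      intro b hbL hbG
      obtain ⟨q, hq, rfl⟩ := inP b (Or.inl hbL)
      have h1 := (memL q hq).mp hbL
      have h2 := (memG q hq).mp hbG
      exact hr d (htr d q.1 d h2 h1)
    have dLU : Disjoint L U := by
      rw [Finset.disjoint_left]
      intro b hbL hbU
      obtain ⟨q, hq, rfl⟩ := inP b (Or.inl hbL)
      exact ((memU q hq).mp hbU).1 ((memL q hq).mp hbL)
    have dGU : Disjoint G U := by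
      rw [Finset.disjoint_left]
      intro b hbG hbU
      obtain ⟨q, hq, rfl⟩ := inP b (Or.inr (Or.inl hbG))
      exact ((memU q hq).mp hbU).2 ((memG q hq).mp hbG)
    have c1 : ∀ l ∈ L, ∀ g ∈ G, s l g := by
      intro l hl g hg
      obtain ⟨q, hq, rfl⟩ := inP l (Or.inl hl)
      obtain ⟨q', hq', rfl⟩ := inP g (Or.inr (Or.inl hg))
      exact (hP q hq q' hq').2.mp (htr _ _ _ ((memL q hq).mp hl) ((memG q' hq').mp hg))
    have c2 : ∀ u ∈ U, ∀ l ∈ L, ¬ s u l := by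
      intro u hu l hl
      obtain ⟨q, hq, rfl⟩ := inP u (Or.inr (Or.inr hu))
      obtain ⟨q', hq', rfl⟩ := inP l (Or.inl hl)
      intro h
      have := (hP q hq q' hq').2.mpr h
      exact ((memU q hq).mp hu).1 (htr _ _ _ this ((memL q' hq').mp hl))
    have c3 : ∀ u ∈ U, ∀ g ∈ G, ¬ s g u := by
      intro u hu g hg
      obtain ⟨q, hq, rfl⟩ := inP u (Or.inr (Or.inr hu))
      obtain ⟨q', hq', rfl⟩ := inP g (Or.inr (Or.inl hg))
      intro h
      have := (hP q' hq' q hq).2.mpr h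
      exact ((memU q hq).mp hu).2 (htr _ _ _ ((memG q' hq').mp hg) this)
    obtain ⟨b, hbL, hbG, hbU, hLb, hbGg, hUb⟩ := hs.2.2 L G U dLG dLU dGU c1 c2 c3
    -- b differs from all snds in P
    have bne : ∀ q ∈ P, b ≠ q.2 := by
      intro q hq h
      by_cases h1 : r q.1 d
      · exact hbL (h ▸ (memL q hq).mpr h1)
      · by_cases h2 : r d q.1
        · exact hbG (h ▸ (memG q hq).mpr h2)
        · exact (hUb q.2 ((memU q hq).mpr ⟨h1, h2⟩)).1 h
    have rel1 : ∀ q ∈ P, (r d q.1 ↔ s b q.2) := by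
      intro q hq
      constructor
      · intro h
        exact hbGg q.2 ((memG q hq).mpr h)
      · intro h
        by_contra h2
        by_cases h1 : r q.1 d
        · exact hs.1 b (hs.2.1 _ _ _ h (hLb q.2 ((memL q hq).mpr h1)))
        · exact (hUb q.2 ((memU q hq).mpr ⟨h1, h2⟩)).2.1 h
    have rel2 : ∀ q ∈ P, (r q.1 d ↔ s q.2 b) := by
      intro q hq
      constructor
      · intro h
        exact hLb q.2 ((memL q hq).mpr h)
      · intro h
        by_contra h1
        by_cases h2 : r d q.1
        · exact hs.1 b (hs.2.1 _ _ _ (hbGg q.2 ((memG q hq).mpr h2)) h)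
        · exact (hUb q.2 ((memU q hq).mpr ⟨h1, h2⟩)).2.2 h
    refine ⟨b, ?_⟩
    intro p hp q hq
    rw [Finset.mem_insert] at hp hq
    rcases hp with rfl | hp <;> rcases hq with rfl | hq
    · exact ⟨by simp, iff_of_false (hr d) (hs.1 b)⟩
    · exact ⟨iff_of_false (fun h => hd q hq h.symm) (bne q hq), rel1 q hq⟩
    · exact ⟨iff_of_false (fun h => hd p hp h) (fun h => bne p hp h.symm), rel2 p hp⟩
    · exact hP p hp q hq


lemma bf_extend_left (r : D → D → Prop) (s : E → E → Prop)
    (hr : IsRandomPosetRel r)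
    (hsirr : ∀ x, ¬ s x x) (hstr : ∀ x y z, s x y → s y z → s x z)
    (P : Finset (D × E)) (hP : BFGood r s P) (e : E) :
    ∃ a : D, BFGood r s (insert (a, e) P) := by
  obtain ⟨a, ha⟩ := bf_extend_right s r hsirr hstr hr (P.image Prod.swap) (bfgood_swap hP) e
  refine ⟨a, ?_⟩
  have h2 : insert (e, a) (P.image Prod.swap) = (insert (a, e) P).image Prod.swap := by
    rw [Finset.image_insert]; rfl
  rw [h2] at ha
  have := bfgood_swap ha
  rwa [Finset.image_image, show Prod.swap ∘ (Prod.swap : D × E → E × D) = id from funext (fun p => Prod.swap_swap p), Finset.image_id] at this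

lemma bf_iso [Countable D] [Infinite D] [Countable E] [Infinite E]
    (r : D → D → Prop) (s : E → E → Prop)
    (hr : IsRandomPosetRel r) (hs : IsRandomPosetRel s) :
    ∃ e : D ≃ E, ∀ x y, r x y ↔ s (e x) (e y) := by
  obtain ⟨iD⟩ := nonempty_denumerable D
  obtain ⟨iE⟩ := nonempty_denumerable E
  let dE : ℕ → D := Denumerable.ofNat D
  let eE : ℕ → E := Denumerable.ofNat E
  have dEsurj : Function.Surjective dE := fun d => ⟨Encodable.encode d, by simp [dE]⟩
  have eEsurj : Function.Surjective eE := fun e => ⟨Encodable.encode e, by simp [eE]⟩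
  have step_ex : ∀ P : Finset (D × E), BFGood r s P → ∀ n : ℕ,
      ∃ Q, BFGood r s Q ∧ P ⊆ Q ∧ (∃ b, (dE n, b) ∈ Q) ∧ (∃ a, (a, eE n) ∈ Q) := by
    intro P hP n
    obtain ⟨b, hb⟩ := bf_extend_right r s hr.1 hr.2.1 hs P hP (dE n)
    obtain ⟨a, ha⟩ := bf_extend_left r s hr hs.1 hs.2.1 _ hb (eE n)
    exact ⟨insert (a, eE n) (insert (dE n, b) P), ha,
      fun x hx => Finset.mem_insert_of_mem (Finset.mem_insert_of_mem hx),
      ⟨b, Finset.mem_insert_of_mem (Finset.mem_insert_self _ _)⟩,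
      ⟨a, Finset.mem_insert_self _ _⟩⟩
  choose! Q hQg hQsub hQd hQe using step_ex
  let c' : ℕ → {P : Finset (D × E) // BFGood r s P} := fun n =>
    Nat.rec ⟨∅, fun p hp => absurd hp (Finset.notMem_empty p)⟩
      (fun n p => ⟨Q p.1 n, hQg p.1 p.2 n⟩) n
  let c : ℕ → Finset (D × E) := fun n => (c' n).1
  have hg : ∀ n, BFGood r s (c n) := fun n => (c' n).2
  have hstep : ∀ n, c (n + 1) = Q (c n) n := fun n => rfl
  have hsub : ∀ n, c n ⊆ c (n + 1) := fun n => hQsub (c n) (c' n).2 n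
  have hmono : ∀ m n, m ≤ n → c m ⊆ c n := by
    intro m n h
    induction h with
    | refl => exact Finset.Subset.refl _
    | step h ih => exact ih.trans (hsub _)
  have pgood : ∀ p q : D × E, (∃ n, p ∈ c n) → (∃ n, q ∈ c n) →
      (p.1 = q.1 ↔ p.2 = q.2) ∧ (r p.1 q.1 ↔ s p.2 q.2) := by
    rintro p q ⟨n, hn⟩ ⟨m, hm⟩
    exact hg (max n m) p (hmono n _ (le_max_left n m) hn) q (hmono m _ (le_max_right n m) hm)
  have exd : ∀ d : D, ∃ b, ∃ n, (d, b) ∈ c n := by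
    intro d
    obtain ⟨n, rfl⟩ := dEsurj d
    obtain ⟨b, hb⟩ := hQd (c n) (c' n).2 n
    exact ⟨b, n + 1, by rw [hstep]; exact hb⟩
  have exe : ∀ e : E, ∃ a, ∃ n, (a, e) ∈ c n := by
    intro e
    obtain ⟨n, rfl⟩ := eEsurj e
    obtain ⟨a, ha⟩ := hQe (c n) (c' n).2 n
    exact ⟨a, n + 1, by rw [hstep]; exact ha⟩
  choose f hf using exd
  choose g hg' using exe
  have linv : Function.LeftInverse g f := by
    intro d
    exact ((pgood (g (f d), f d) (d, f d) (hg' (f d)) (hf d)).1.mpr rfl)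
  have rinv : Function.RightInverse g f := by
    intro e
    exact ((pgood (g e, f (g e)) (g e, e) (hf (g e)) (hg' e)).1.mp rfl)
  refine ⟨⟨f, g, linv, rinv⟩, ?_⟩
  intro x y
  exact (pgood (x, f x) (y, f y) (hf x) (hf y)).2

end BF

section Avoid
variable {D : Type*}

lemma ext_avoid (r : D → D → Prop) (hrp : IsRandomPosetRel r)
    (L G U V : Finset D) (hLG : Disjoint L G) (hLU : Disjoint L U) (hGU : Disjoint G U)
    (c1 : ∀ l ∈ L, ∀ g ∈ G, r l g)
    (c2 : ∀ u ∈ U, ∀ l ∈ L, ¬ r u l)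
    (c3 : ∀ u ∈ U, ∀ g ∈ G, ¬ r g u) :
    ∃ p : D, p ∉ ↑V ∧ p ∉ L ∧ p ∉ G ∧ p ∉ U ∧ (∀ l ∈ L, r l p) ∧ (∀ g ∈ G, r p g) ∧
      ∀ u ∈ U, p ≠ u ∧ ¬ r p u ∧ ¬ r u p := by
  set S : Set D := {p | p ∉ L ∧ p ∉ G ∧ p ∉ U ∧ (∀ l ∈ L, r l p) ∧ (∀ g ∈ G, r p g) ∧
      ∀ u ∈ U, p ≠ u ∧ ¬ r p u ∧ ¬ r u p} with hSdef
  have hS : S.Infinite := by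
    by_contra h
    rw [Set.not_infinite] at h
    have hdLS : Disjoint L h.toFinset := by
      rw [Finset.disjoint_left]
      intro l hl hlS
      exact ((h.mem_toFinset.mp hlS).1) hl
    have hdGS : Disjoint G h.toFinset := by
      rw [Finset.disjoint_left]
      intro g hg hgS
      exact ((h.mem_toFinset.mp hgS).2.1) hg
    obtain ⟨q, hqL, hqG, hqU, hLq, hqG', hU'⟩ := hrp.2.2 L G (U ∪ h.toFinset)
      hLG (Finset.disjoint_union_right.mpr ⟨hLU, hdLS⟩)
      (Finset.disjoint_union_right.mpr ⟨hGU, hdGS⟩) c1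
      (by
        intro u hu l hl
        rcases Finset.mem_union.mp hu with hu | hu
        · exact c2 u hu l hl
        · intro hul
          obtain ⟨_, _, _, hLu, _, _⟩ := h.mem_toFinset.mp hu
          exact hrp.1 u (hrp.2.1 _ _ _ hul (hLu l hl)))
      (by
        intro u hu g hg
        rcases Finset.mem_union.mp hu with hu | hu
        · exact c3 u hu g hg
        · intro hgu
          obtain ⟨_, _, _, _, hGu, _⟩ := h.mem_toFinset.mp hu
          exact hrp.1 g (hrp.2.1 _ _ _ hgu (hGu g hg)))
    have hqS : q ∈ S := by
      refine ⟨hqL, hqG, fun hq => hqU (Finset.mem_union_left _ hq), hLq, hqG', ?_⟩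
      intro u hu
      exact hU' u (Finset.mem_union_left _ hu)
    exact (hU' q (Finset.mem_union_right _ (h.mem_toFinset.mpr hqS))).1 rfl
  obtain ⟨p, hpS, hpV⟩ := hS.exists_notMem_finset V
  obtain ⟨h1, h2, h3, h4, h5, h6⟩ := hpS
  exact ⟨p, hpV, h1, h2, h3, h4, h5, h6⟩

lemma random_sub (r : D → D → Prop) (hrp : IsRandomPosetRel r)
    (A : Set D) (hA : Aᶜ.Finite) :
    IsRandomPosetRel (fun (a b : A) => r a.1 b.1) := by
  refine ⟨fun x => hrp.1 x.1, fun x y z => hrp.2.1 x.1 y.1 z.1, ?_⟩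
  intro L G U hLG hLU hGU c1 c2 c3
  have vinj : Function.Injective (Subtype.val : A → D) := Subtype.val_injective
  have dis : ∀ {S T : Finset A}, Disjoint S T →
      Disjoint (S.image Subtype.val) (T.image Subtype.val) := by
    intro S T h
    rw [Finset.disjoint_image vinj]
    exact h
  obtain ⟨p, hpV, hpL, hpG, hpU, h4, h5, h6⟩ := ext_avoid r hrp
    (L.image Subtype.val) (G.image Subtype.val) (U.image Subtype.val) hA.toFinset
    (dis hLG) (dis hLU) (dis hGU)
    (by
      intro l hl g hg
      simp only [Finset.mem_image] at hl hg
      obtain ⟨l', hl', rfl⟩ := hl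
      obtain ⟨g', hg', rfl⟩ := hg
      exact c1 l' hl' g' hg')
    (by
      intro u hu l hl
      simp only [Finset.mem_image] at hu hl
      obtain ⟨u', hu', rfl⟩ := hu
      obtain ⟨l', hl', rfl⟩ := hl
      exact c2 u' hu' l' hl')
    (by
      intro u hu g hg
      simp only [Finset.mem_image] at hu hg
      obtain ⟨u', hu', rfl⟩ := hu
      obtain ⟨g', hg', rfl⟩ := hg
      exact c3 u' hu' g' hg')
  have hpA : p ∈ A := by
    by_contra h
    exact hpV (by simpa using hA.mem_toFinset.mpr h)
  refine ⟨⟨p, hpA⟩, ?_, ?_, ?_, ?_, ?_, ?_⟩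
  · intro h; exact hpL (Finset.mem_image_of_mem Subtype.val h)
  · intro h; exact hpG (Finset.mem_image_of_mem Subtype.val h)
  · intro h; exact hpU (Finset.mem_image_of_mem Subtype.val h)
  · intro l hl; exact h4 l.1 (Finset.mem_image_of_mem Subtype.val hl)
  · intro g hg; exact h5 g.1 (Finset.mem_image_of_mem Subtype.val hg)
  · intro u hu
    obtain ⟨n1, n2, n3⟩ := h6 u.1 (Finset.mem_image_of_mem Subtype.val hu)
    exact ⟨fun h => n1 (congrArg Subtype.val h), n2, n3⟩

end Avoid

theorem statement_9 {D : Type*} [Countable D] [Infinite D] (r : D → D → Prop)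
    (hrp : IsRandomPosetRel r) (F : Set D) (hF : F.Finite) :
    IsCopy r (Set.univ \ F) := by
  set A : Set D := Set.univ \ F with hA
  have hAc : Aᶜ = F := by ext x; simp [hA]
  have hAcF : Aᶜ.Finite := hAc ▸ hF
  have hAinf : A.Infinite := by
    have := hF.infinite_compl (α := D)
    rwa [Set.compl_eq_univ_diff] at this
  haveI : Infinite A := hAinf.to_subtype
  have hs := random_sub r hrp A hAcF
  obtain ⟨e, he⟩ := bf_iso r (fun (a b : A) => r a.1 b.1) hrp hs
  refine ⟨fun d => (e d).1, ?_, ?_, he⟩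
  · exact Subtype.val_injective.comp e.injective
  · rw [show (fun d => ((e d : A) : D)) = Subtype.val ∘ e from rfl, Set.range_comp,
      e.range_eq_univ, Set.image_univ, Subtype.range_val]
end

section
/- Let ⟨D,<⟩ be a countable random poset and let D = A ∪ B with A ∩ B = ∅. Then A contains a subset order-isomorphic to ⟨D,<⟩ (with the induced order) or B contains a subset order-isomorphic to ⟨D,<⟩. -/
open Set

section Aux
variable {D : Type*}

/-- Extension property relativized to a set `T`. -/
def ExtIn (r : D → D → Prop) (T : Set D) : Prop :=
  ∀ L G U : Finset D, ↑L ⊆ T → ↑G ⊆ T → ↑U ⊆ T →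
    Disjoint L G → Disjoint L U → Disjoint G U →
    (∀ l ∈ L, ∀ g ∈ G, r l g) →
    (∀ u ∈ U, ∀ l ∈ L, ¬ r u l) →
    (∀ u ∈ U, ∀ g ∈ G, ¬ r g u) →
    ∃ p ∈ T, (∀ l ∈ L, r l p) ∧ (∀ g ∈ G, r p g) ∧
      ∀ u ∈ U, p ≠ u ∧ ¬ r p u ∧ ¬ r u p

def GoodCond (r : D → D → Prop) (T : Set D) (d : ℕ → D) (n : ℕ) (f : ℕ → D) (p : D) : Prop :=
  p ∈ T ∧ ∀ m, m < n →
    (r (d m) (d n) → r (f m) p) ∧ (r (d n) (d m) → r p (f m)) ∧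
    (¬ r (d m) (d n) → ¬ r (d n) (d m) → p ≠ f m ∧ ¬ r p (f m) ∧ ¬ r (f m) p)

lemma goodCond_congr {r : D → D → Prop} {T : Set D} {d : ℕ → D} {n : ℕ} {f f' : ℕ → D} {p : D}
    (h : ∀ m, m < n → f m = f' m) (hg : GoodCond r T d n f p) : GoodCond r T d n f' p := by
  refine ⟨hg.1, fun m hm => ?_⟩
  have := hg.2 m hm
  rw [h m hm] at this
  exact this

open Classical in
noncomputable def build [Nonempty D] (r : D → D → Prop) (T : Set D) (d : ℕ → D) : ℕ → D
  | n =>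
    if h : ∃ p, GoodCond r T d n
        (fun m => if hm : m < n then build r T d m else Classical.arbitrary D) p
    then h.choose else Classical.arbitrary D
  termination_by n => n
  decreasing_by all_goals simpa using hm

variable {r : D → D → Prop} {T : Set D} {d : ℕ → D}

lemma step_facts [Nonempty D] (hirr : ∀ x, ¬ r x x) (htr : ∀ x y z, r x y → r y z → r x z)
    {k m : ℕ} (hg : GoodCond r T d k (build r T d) (build r T d k)) (hm : m < k) :
    (r (d m) (d k) ↔ r (build r T d m) (build r T d k)) ∧
    (r (d k) (d m) ↔ r (build r T d k) (build r T d m)) ∧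
    build r T d k ≠ build r T d m := by
  obtain ⟨h1, h2, h3⟩ := hg.2 m hm
  by_cases hmk : r (d m) (d k)
  · have hbmk : r (build r T d m) (build r T d k) := h1 hmk
    have hkm : ¬ r (d k) (d m) := fun h => hirr _ (htr _ _ _ hmk h)
    have hbkm : ¬ r (build r T d k) (build r T d m) := fun h => hirr _ (htr _ _ _ hbmk h)
    refine ⟨iff_of_true hmk hbmk, iff_of_false hkm hbkm, ?_⟩
    intro he; rw [he] at hbmk; exact hirr _ hbmk
  · by_cases hkm : r (d k) (d m)
    · have hbkm : r (build r T d k) (build r T d m) := h2 hkm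
      have hbmk : ¬ r (build r T d m) (build r T d k) := fun h => hirr _ (htr _ _ _ h hbkm)
      refine ⟨iff_of_false hmk hbmk, iff_of_true hkm hbkm, ?_⟩
      intro he; rw [he] at hbkm; exact hirr _ hbkm
    · obtain ⟨hne, hpk, hkp⟩ := h3 hmk hkm
      exact ⟨iff_of_false hmk hkp, iff_of_false hkm hpk, hne⟩

lemma build_good [Nonempty D] (hirr : ∀ x, ¬ r x x) (htr : ∀ x y z, r x y → r y z → r x z)
    (hT : ExtIn r T) : ∀ n, GoodCond r T d n (build r T d) (build r T d n) := by
  intro n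
  induction n using Nat.strong_induction_on with
  | _ n IH =>
  classical
  have hpair : ∀ m₁ m₂, m₁ < n → m₂ < n →
      (r (d m₁) (d m₂) ↔ r (build r T d m₁) (build r T d m₂)) := by
    intro m₁ m₂ h₁ h₂
    rcases lt_trichotomy m₁ m₂ with h | rfl | h
    · exact (step_facts hirr htr (IH m₂ h₂) h).1
    · exact iff_of_false (hirr _) (hirr _)
    · exact (step_facts hirr htr (IH m₁ h₁) h).2.1
  have hinj : ∀ m₁ m₂, m₁ < n → m₂ < n → build r T d m₁ = build r T d m₂ → m₁ = m₂ := by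
    intro m₁ m₂ h₁ h₂ he
    rcases lt_trichotomy m₁ m₂ with h | h | h
    · exact absurd he.symm (step_facts hirr htr (IH m₂ h₂) h).2.2
    · exact h
    · exact absurd he (step_facts hirr htr (IH m₁ h₁) h).2.2
  set L : Finset D :=
    ((Finset.range n).filter (fun m => r (d m) (d n))).image (build r T d) with hLdef
  set G : Finset D :=
    ((Finset.range n).filter (fun m => r (d n) (d m))).image (build r T d) with hGdef
  set U : Finset D :=
    ((Finset.range n).filter (fun m => ¬ r (d m) (d n) ∧ ¬ r (d n) (d m))).image
      (build r T d) with hUdef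
  have memL : ∀ x, x ∈ L ↔ ∃ m, m < n ∧ r (d m) (d n) ∧ build r T d m = x := by
    intro x
    simp only [hLdef, Finset.mem_image, Finset.mem_filter, Finset.mem_range]
    tauto
  have memG : ∀ x, x ∈ G ↔ ∃ m, m < n ∧ r (d n) (d m) ∧ build r T d m = x := by
    intro x
    simp only [hGdef, Finset.mem_image, Finset.mem_filter, Finset.mem_range]
    tauto
  have memU : ∀ x, x ∈ U ↔
      ∃ m, m < n ∧ (¬ r (d m) (d n) ∧ ¬ r (d n) (d m)) ∧ build r T d m = x := by
    intro x
    simp only [hUdef, Finset.mem_image, Finset.mem_filter, Finset.mem_range]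
    tauto
  have hLT : ↑L ⊆ T := by
    intro x hx
    obtain ⟨m, hm, -, rfl⟩ := (memL x).1 hx
    exact (IH m hm).1
  have hGT : ↑G ⊆ T := by
    intro x hx
    obtain ⟨m, hm, -, rfl⟩ := (memG x).1 hx
    exact (IH m hm).1
  have hUT : ↑U ⊆ T := by
    intro x hx
    obtain ⟨m, hm, -, rfl⟩ := (memU x).1 hx
    exact (IH m hm).1
  have dLG : Disjoint L G := by
    rw [Finset.disjoint_left]
    intro a haL haG
    obtain ⟨m₁, hm₁, h₁, rfl⟩ := (memL _).1 haL
    obtain ⟨m₂, hm₂, h₂, he⟩ := (memG _).1 haG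
    cases hinj m₂ m₁ hm₂ hm₁ he
    exact hirr _ (htr _ _ _ h₁ h₂)
  have dLU : Disjoint L U := by
    rw [Finset.disjoint_left]
    intro a haL haU
    obtain ⟨m₁, hm₁, h₁, rfl⟩ := (memL _).1 haL
    obtain ⟨m₂, hm₂, h₂, he⟩ := (memU _).1 haU
    cases hinj m₂ m₁ hm₂ hm₁ he
    exact h₂.1 h₁
  have dGU : Disjoint G U := by
    rw [Finset.disjoint_left]
    intro a haG haU
    obtain ⟨m₁, hm₁, h₁, rfl⟩ := (memG _).1 haG
    obtain ⟨m₂, hm₂, h₂, he⟩ := (memU _).1 haU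
    cases hinj m₂ m₁ hm₂ hm₁ he
    exact h₂.2 h₁
  have C1 : ∀ l ∈ L, ∀ g ∈ G, r l g := by
    intro l hl g hg
    obtain ⟨m₁, hm₁, h₁, rfl⟩ := (memL l).1 hl
    obtain ⟨m₂, hm₂, h₂, rfl⟩ := (memG g).1 hg
    exact (hpair m₁ m₂ hm₁ hm₂).1 (htr _ _ _ h₁ h₂)
  have C2 : ∀ u ∈ U, ∀ l ∈ L, ¬ r u l := by
    intro u hu l hl
    obtain ⟨m₁, hm₁, h₁, rfl⟩ := (memU u).1 hu
    obtain ⟨m₂, hm₂, h₂, rfl⟩ := (memL l).1 hl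
    intro hr
    exact h₁.1 (htr _ _ _ ((hpair m₁ m₂ hm₁ hm₂).2 hr) h₂)
  have C3 : ∀ u ∈ U, ∀ g ∈ G, ¬ r g u := by
    intro u hu g hg
    obtain ⟨m₁, hm₁, h₁, rfl⟩ := (memU u).1 hu
    obtain ⟨m₂, hm₂, h₂, rfl⟩ := (memG g).1 hg
    intro hr
    exact h₁.2 (htr _ _ _ h₂ ((hpair m₂ m₁ hm₂ hm₁).2 hr))
  obtain ⟨p, hpT, hpL, hpG, hpU⟩ := hT L G U hLT hGT hUT dLG dLU dGU C1 C2 C3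
  have hgood : GoodCond r T d n (build r T d) p := by
    refine ⟨hpT, fun m hm => ?_⟩
    refine ⟨fun h => hpL _ ((memL _).2 ⟨m, hm, h, rfl⟩),
           fun h => hpG _ ((memG _).2 ⟨m, hm, h, rfl⟩),
           fun h1 h2 => hpU _ ((memU _).2 ⟨m, hm, ⟨h1, h2⟩, rfl⟩)⟩
  have hex : ∃ q, GoodCond r T d n
      (fun m => if hm : m < n then build r T d m else Classical.arbitrary D) q :=
    ⟨p, goodCond_congr (f := build r T d) (f' := fun m => if hm : m < n then build r T d m else Classical.arbitrary D)
      (by intro m hm; simp only [dif_pos hm]) hgood⟩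
  have heq : build r T d n = hex.choose := by
    conv_lhs => rw [build]
    rw [dif_pos hex]
  rw [heq]
  exact goodCond_congr (by intro m hm; simp only [dif_pos hm]) hex.choose_spec

lemma exists_copy_subset [Countable D] [Infinite D]
    (hirr : ∀ x, ¬ r x x) (htr : ∀ x y z, r x y → r y z → r x z) (hT : ExtIn r T) :
    ∃ S ⊆ T, ∃ f : D → D, Function.Injective f ∧ Set.range f = S ∧
      ∀ x y, r x y ↔ r (f x) (f y) := by
  obtain ⟨e⟩ : Nonempty (D ≃ ℕ) := nonempty_equiv_of_countable
  set d : ℕ → D := fun n => e.symm n with hd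
  have good := build_good (d := d) hirr htr hT
  have allIff : ∀ m k, r (d m) (d k) ↔ r (build r T d m) (build r T d k) := by
    intro m k
    rcases lt_trichotomy m k with h | rfl | h
    · exact (step_facts hirr htr (good k) h).1
    · exact iff_of_false (hirr _) (hirr _)
    · exact (step_facts hirr htr (good m) h).2.1
  have binj : ∀ m k, build r T d m = build r T d k → m = k := by
    intro m k he
    rcases lt_trichotomy m k with h | h | h
    · exact absurd he.symm (step_facts hirr htr (good k) h).2.2
    · exact h
    · exact absurd he (step_facts hirr htr (good m) h).2.2
  refine ⟨Set.range (fun x => build r T d (e x)), ?_,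
    (fun x => build r T d (e x)), ?_, rfl, ?_⟩
  · rintro _ ⟨x, rfl⟩
    exact (good (e x)).1
  · intro x y hxy
    have := binj (e x) (e y) hxy
    exact e.injective this
  · intro x y
    have h := allIff (e x) (e y)
    simpa [hd] using h

end Aux

theorem statement_10 {D : Type*} [Countable D] [Infinite D] (r : D → D → Prop)
    (hrp : IsRandomPosetRel r) (A B : Set D) (hcov : A ∪ B = Set.univ)
    (hdisj : A ∩ B = ∅) :
    (∃ S ⊆ A, IsCopy r S) ∨ (∃ S ⊆ B, IsCopy r S) := by
  classical
  obtain ⟨hirr, htr, hext⟩ := hrp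
  by_cases hA : ∃ L G U : Finset D, Disjoint L G ∧ Disjoint L U ∧ Disjoint G U ∧
      (∀ l ∈ L, ∀ g ∈ G, r l g) ∧ (∀ u ∈ U, ∀ l ∈ L, ¬ r u l) ∧
      (∀ u ∈ U, ∀ g ∈ G, ¬ r g u) ∧
      ∀ p, ((∀ l ∈ L, r l p) ∧ (∀ g ∈ G, r p g) ∧
        (∀ u ∈ U, p ≠ u ∧ ¬ r p u ∧ ¬ r u p)) → p ∉ A
  · right
    obtain ⟨L₀, G₀, U₀, d1, d2, d3, c1, c2, c3, hno⟩ := hA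
    set W : Set D := {p | (∀ l ∈ L₀, r l p) ∧ (∀ g ∈ G₀, r p g) ∧
      ∀ u ∈ U₀, p ≠ u ∧ ¬ r p u ∧ ¬ r u p} with hW
    have hWB : W ⊆ B := by
      intro p hp
      have hpA : p ∉ A := hno p hp
      have : p ∈ A ∪ B := by rw [hcov]; trivial
      exact this.resolve_left hpA
    have notL₀ : ∀ p ∈ W, p ∉ L₀ := fun p hp h => hirr p (hp.1 p h)
    have notG₀ : ∀ p ∈ W, p ∉ G₀ := fun p hp h => hirr p (hp.2.1 p h)
    have notU₀ : ∀ p ∈ W, p ∉ U₀ := fun p hp h => (hp.2.2 p h).1 rfl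
    have hWext : ExtIn r W := by
      intro L G U hLW hGW hUW dLG dLU dGU C1 C2 C3
      have D1 : Disjoint (L ∪ L₀) (G ∪ G₀) := by
        rw [Finset.disjoint_union_left, Finset.disjoint_union_right,
          Finset.disjoint_union_right]
        refine ⟨⟨dLG, ?_⟩, ?_, d1⟩
        · exact Finset.disjoint_left.2 fun a haL haG₀ => notG₀ a (hLW haL) haG₀
        · exact Finset.disjoint_right.2 fun a haG haL₀ => notL₀ a (hGW haG) haL₀
      have D2 : Disjoint (L ∪ L₀) (U ∪ U₀) := by
        rw [Finset.disjoint_union_left, Finset.disjoint_union_right,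
          Finset.disjoint_union_right]
        refine ⟨⟨dLU, ?_⟩, ?_, d2⟩
        · exact Finset.disjoint_left.2 fun a haL haU₀ => notU₀ a (hLW haL) haU₀
        · exact Finset.disjoint_right.2 fun a haU haL₀ => notL₀ a (hUW haU) haL₀
      have D3 : Disjoint (G ∪ G₀) (U ∪ U₀) := by
        rw [Finset.disjoint_union_left, Finset.disjoint_union_right,
          Finset.disjoint_union_right]
        refine ⟨⟨dGU, ?_⟩, ?_, d3⟩
        · exact Finset.disjoint_left.2 fun a haG haU₀ => notU₀ a (hGW haG) haU₀
        · exact Finset.disjoint_right.2 fun a haU haG₀ => notG₀ a (hUW haU) haG₀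
      have E1 : ∀ l ∈ L ∪ L₀, ∀ g ∈ G ∪ G₀, r l g := by
        intro l hl g hg
        rcases Finset.mem_union.1 hl with hl | hl <;> rcases Finset.mem_union.1 hg with hg | hg
        · exact C1 l hl g hg
        · exact (hLW hl).2.1 g hg
        · exact (hGW hg).1 l hl
        · exact c1 l hl g hg
      have E2 : ∀ u ∈ U ∪ U₀, ∀ l ∈ L ∪ L₀, ¬ r u l := by
        intro u hu l hl
        rcases Finset.mem_union.1 hu with hu | hu <;> rcases Finset.mem_union.1 hl with hl | hl
        · exact C2 u hu l hl
        · exact fun h => hirr _ (htr _ _ _ ((hUW hu).1 l hl) h)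
        · exact ((hLW hl).2.2 u hu).2.2
        · exact c2 u hu l hl
      have E3 : ∀ u ∈ U ∪ U₀, ∀ g ∈ G ∪ G₀, ¬ r g u := by
        intro u hu g hg
        rcases Finset.mem_union.1 hu with hu | hu <;> rcases Finset.mem_union.1 hg with hg | hg
        · exact C3 u hu g hg
        · exact fun h => hirr _ (htr _ _ _ h ((hUW hu).2.1 g hg))
        · exact ((hGW hg).2.2 u hu).2.1
        · exact c3 u hu g hg
      obtain ⟨p, _, _, _, hpL, hpG, hpU⟩ :=
        hext (L ∪ L₀) (G ∪ G₀) (U ∪ U₀) D1 D2 D3 E1 E2 E3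
      have hpW : p ∈ W :=
        ⟨fun l hl => hpL l (Finset.mem_union_right _ hl),
         fun g hg => hpG g (Finset.mem_union_right _ hg),
         fun u hu => hpU u (Finset.mem_union_right _ hu)⟩
      exact ⟨p, hpW, fun l hl => hpL l (Finset.mem_union_left _ hl),
        fun g hg => hpG g (Finset.mem_union_left _ hg),
        fun u hu => hpU u (Finset.mem_union_left _ hu)⟩
    obtain ⟨S, hS, hcopy⟩ := exists_copy_subset hirr htr hWext
    exact ⟨S, hS.trans hWB, hcopy⟩
  · left
    have key : ExtIn r A := by
      intro L G U _ _ _ dLG dLU dGU C1 C2 C3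
      by_contra hno
      refine hA ⟨L, G, U, dLG, dLU, dGU, C1, C2, C3, fun p hw hpA => hno ⟨p, hpA, hw⟩⟩
    obtain ⟨S, hS, hcopy⟩ := exists_copy_subset hirr htr key
    exact ⟨S, hS, hcopy⟩
end

section
/- Let ⟨D,<⟩ be a countable random poset and let C ⊆ D be a set containing no subset which (with the induced order) is order-isomorphic to ⟨D,<⟩. Then D \ C, with the induced order, is order-isomorphic to ⟨D,<⟩. -/
open Set

section Aux

variable {D : Type*}

/-- `B` internally satisfies the random-poset extension property. -/
def RPSet (r : D → D → Prop) (B : Set D) : Prop :=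
  ∀ L G U : Finset D, ↑L ⊆ B → ↑G ⊆ B → ↑U ⊆ B →
    Disjoint L G → Disjoint L U → Disjoint G U →
    (∀ l ∈ L, ∀ g ∈ G, r l g) →
    (∀ u ∈ U, ∀ l ∈ L, ¬ r u l) →
    (∀ u ∈ U, ∀ g ∈ G, ¬ r g u) →
    ∃ p, p ∈ B ∧ (∀ l ∈ L, r l p) ∧ (∀ g ∈ G, r p g) ∧
      ∀ u ∈ U, p ≠ u ∧ ¬ r p u ∧ ¬ r u p

lemma rpset_univ {r : D → D → Prop} (hrp : IsRandomPosetRel r) : RPSet r univ := by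
  intro L G U _ _ _ d1 d2 d3 c1 c2 c3
  obtain ⟨p, -, -, -, h4, h5, h6⟩ := hrp.2.2 L G U d1 d2 d3 c1 c2 c3
  exact ⟨p, trivial, h4, h5, h6⟩

lemma exists_match {r : D → D → Prop}
    (hirr : ∀ x, ¬ r x x) (htr : ∀ x y z, r x y → r y z → r x z)
    {B : Set D} (hB : RPSet r B) (l : List (D × D))
    (hsnd : ∀ p ∈ l, p.2 ∈ B)
    (hnd : (l.map Prod.snd).Nodup)
    (hpres : ∀ p ∈ l, ∀ q ∈ l, (r p.1 q.1 ↔ r p.2 q.2))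
    (x : D) :
    ∃ y, y ∈ B ∧ y ∉ l.map Prod.snd ∧
      ∀ p ∈ l, (r p.1 x ↔ r p.2 y) ∧ (r x p.1 ↔ r y p.2) := by
  classical
  have hinj : ∀ p ∈ l, ∀ q ∈ l, p.2 = q.2 → p = q :=
    fun p hp q hq h => List.inj_on_of_nodup_map hnd hp hq h
  set s : Finset (D × D) := l.toFinset with hs
  set L : Finset D := (s.filter (fun p => r p.1 x)).image Prod.snd with hL
  set G : Finset D := (s.filter (fun p => r x p.1)).image Prod.snd with hG
  set U : Finset D := (s.filter (fun p => ¬ r p.1 x ∧ ¬ r x p.1)).image Prod.snd with hU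
  have memL : ∀ {a}, a ∈ L ↔ ∃ p ∈ l, r p.1 x ∧ p.2 = a := by
    intro a
    simp only [hL, Finset.mem_image, Finset.mem_filter, hs, List.mem_toFinset]
    constructor
    · rintro ⟨p, ⟨hp, hr⟩, rfl⟩; exact ⟨p, hp, hr, rfl⟩
    · rintro ⟨p, hp, hr, rfl⟩; exact ⟨p, ⟨hp, hr⟩, rfl⟩
  have memG : ∀ {a}, a ∈ G ↔ ∃ p ∈ l, r x p.1 ∧ p.2 = a := by
    intro a
    simp only [hG, Finset.mem_image, Finset.mem_filter, hs, List.mem_toFinset]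
    constructor
    · rintro ⟨p, ⟨hp, hr⟩, rfl⟩; exact ⟨p, hp, hr, rfl⟩
    · rintro ⟨p, hp, hr, rfl⟩; exact ⟨p, ⟨hp, hr⟩, rfl⟩
  have memU : ∀ {a}, a ∈ U ↔ ∃ p ∈ l, (¬ r p.1 x ∧ ¬ r x p.1) ∧ p.2 = a := by
    intro a
    simp only [hU, Finset.mem_image, Finset.mem_filter, hs, List.mem_toFinset]
    constructor
    · rintro ⟨p, ⟨hp, hr⟩, rfl⟩; exact ⟨p, hp, hr, rfl⟩
    · rintro ⟨p, hp, hr, rfl⟩; exact ⟨p, ⟨hp, hr⟩, rfl⟩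
  have hLB : ↑L ⊆ B := by
    intro a ha; obtain ⟨p, hp, -, rfl⟩ := memL.1 ha; exact hsnd p hp
  have hGB : ↑G ⊆ B := by
    intro a ha; obtain ⟨p, hp, -, rfl⟩ := memG.1 ha; exact hsnd p hp
  have hUB : ↑U ⊆ B := by
    intro a ha; obtain ⟨p, hp, -, rfl⟩ := memU.1 ha; exact hsnd p hp
  have dLG : Disjoint L G := by
    rw [Finset.disjoint_left]
    rintro a haL haG
    obtain ⟨p, hp, h1, rfl⟩ := memL.1 haL
    obtain ⟨q, hq, h2, h3⟩ := memG.1 haG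
    cases hinj q hq p hp h3
    exact hirr x (htr _ _ _ h2 h1)
  have dLU : Disjoint L U := by
    rw [Finset.disjoint_left]
    rintro a haL haU
    obtain ⟨p, hp, h1, rfl⟩ := memL.1 haL
    obtain ⟨q, hq, h2, h3⟩ := memU.1 haU
    cases hinj q hq p hp h3
    exact h2.1 h1
  have dGU : Disjoint G U := by
    rw [Finset.disjoint_left]
    rintro a haG haU
    obtain ⟨p, hp, h1, rfl⟩ := memG.1 haG
    obtain ⟨q, hq, h2, h3⟩ := memU.1 haU
    cases hinj q hq p hp h3
    exact h2.2 h1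
  have c1 : ∀ a ∈ L, ∀ b ∈ G, r a b := by
    intro a ha b hb
    obtain ⟨p, hp, h1, rfl⟩ := memL.1 ha
    obtain ⟨q, hq, h2, rfl⟩ := memG.1 hb
    exact (hpres p hp q hq).1 (htr _ _ _ h1 h2)
  have c2 : ∀ b ∈ U, ∀ a ∈ L, ¬ r b a := by
    intro b hb a ha hr
    obtain ⟨q, hq, h2, rfl⟩ := memU.1 hb
    obtain ⟨p, hp, h1, rfl⟩ := memL.1 ha
    exact h2.1 (htr _ _ _ ((hpres q hq p hp).2 hr) h1)
  have c3 : ∀ b ∈ U, ∀ a ∈ G, ¬ r a b := by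
    intro b hb a ha hr
    obtain ⟨q, hq, h2, rfl⟩ := memU.1 hb
    obtain ⟨p, hp, h1, rfl⟩ := memG.1 ha
    exact h2.2 (htr _ _ _ h1 ((hpres p hp q hq).2 hr))
  obtain ⟨y, hyB, hyL, hyG, hyU⟩ := hB L G U hLB hGB hUB dLG dLU dGU c1 c2 c3
  have tri : ∀ p ∈ l, p.2 ∈ L ∨ p.2 ∈ G ∨ p.2 ∈ U := by
    intro p hp
    by_cases h1 : r p.1 x
    · exact Or.inl (memL.2 ⟨p, hp, h1, rfl⟩)
    by_cases h2 : r x p.1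
    · exact Or.inr (Or.inl (memG.2 ⟨p, hp, h2, rfl⟩))
    · exact Or.inr (Or.inr (memU.2 ⟨p, hp, ⟨h1, h2⟩, rfl⟩))
  refine ⟨y, hyB, ?_, ?_⟩
  · intro hy
    obtain ⟨p, hp, hpy⟩ := List.mem_map.1 hy
    rcases tri p hp with h | h | h
    · exact hirr y (by simpa [hpy] using hyL p.2 h)
    · exact hirr y (by simpa [hpy] using hyG p.2 h)
    · exact (hyU p.2 h).1 hpy.symm
  · intro p hp
    constructor
    · constructor
      · intro h1; exact hyL p.2 (memL.2 ⟨p, hp, h1, rfl⟩)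
      · intro h1
        by_contra hx1
        by_cases h2 : r x p.1
        · exact hirr _ (htr _ _ _ h1 (hyG p.2 (memG.2 ⟨p, hp, h2, rfl⟩)))
        · exact (hyU p.2 (memU.2 ⟨p, hp, ⟨hx1, h2⟩, rfl⟩)).2.2 h1
    · constructor
      · intro h2; exact hyG p.2 (memG.2 ⟨p, hp, h2, rfl⟩)
      · intro h2
        by_contra hx2
        by_cases h1 : r p.1 x
        · exact hirr _ (htr _ _ _ h2 (hyL p.2 (memL.2 ⟨p, hp, h1, rfl⟩)))
        · exact (hyU p.2 (memU.2 ⟨p, hp, ⟨h1, hx2⟩, rfl⟩)).2.1 h2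

lemma exists_match' {r : D → D → Prop}
    (hirr : ∀ x, ¬ r x x) (htr : ∀ x y z, r x y → r y z → r x z)
    (huniv : RPSet r univ) (l : List (D × D))
    (hnd : (l.map Prod.fst).Nodup)
    (hpres : ∀ p ∈ l, ∀ q ∈ l, (r p.1 q.1 ↔ r p.2 q.2))
    (y : D) :
    ∃ x, x ∉ l.map Prod.fst ∧
      ∀ p ∈ l, (r p.1 x ↔ r p.2 y) ∧ (r x p.1 ↔ r y p.2) := by
  have hmap : (l.map Prod.swap).map Prod.snd = l.map Prod.fst := by
    rw [List.map_map]; rfl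
  obtain ⟨x, -, hx1, hx2⟩ := exists_match hirr htr huniv (l.map Prod.swap)
    (fun p _ => trivial) (by rw [hmap]; exact hnd)
    (by
      intro p hp q hq
      obtain ⟨p', hp', rfl⟩ := List.mem_map.1 hp
      obtain ⟨q', hq', rfl⟩ := List.mem_map.1 hq
      exact (hpres p' hp' q' hq').symm) y
  refine ⟨x, by rwa [hmap] at hx1, ?_⟩
  intro p hp
  have := hx2 p.swap (List.mem_map.2 ⟨p, hp, rfl⟩)
  exact ⟨this.1.symm, this.2.symm⟩

variable [Nonempty D]

attribute [local instance] Classical.propDecidable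

/-- Match a new point into `B`. -/
noncomputable def matchB (r : D → D → Prop) (B : Set D) (l : List (D × D)) (x : D) : D :=
  Classical.epsilon fun y => y ∈ B ∧ y ∉ l.map Prod.snd ∧
    ∀ p ∈ l, (r p.1 x ↔ r p.2 y) ∧ (r x p.1 ↔ r y p.2)

/-- Match a new point on the domain side. -/
noncomputable def matchA (r : D → D → Prop) (l : List (D × D)) (y : D) : D :=
  Classical.epsilon fun x => x ∉ l.map Prod.fst ∧
    ∀ p ∈ l, (r p.1 x ↔ r p.2 y) ∧ (r x p.1 ↔ r y p.2)

noncomputable def bfSeq (r : D → D → Prop) (B : Set D) (e eB : ℕ → D) : ℕ → List (D × D)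
  | 0 => []
  | n + 1 =>
    let l := bfSeq r B e eB n
    if n % 2 = 0 then
      if e (n / 2) ∈ l.map Prod.fst then l else l ++ [(e (n / 2), matchB r B l (e (n / 2)))]
    else
      if eB (n / 2) ∈ l.map Prod.snd then l else l ++ [(matchA r l (eB (n / 2)), eB (n / 2))]

lemma bfSeq_zero {r : D → D → Prop} {B : Set D} {e eB : ℕ → D} :
    bfSeq r B e eB 0 = [] := rfl

lemma bfSeq_succ {r : D → D → Prop} {B : Set D} {e eB : ℕ → D} (n : ℕ) :
    bfSeq r B e eB (n + 1) =
      if n % 2 = 0 then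
        (if e (n / 2) ∈ (bfSeq r B e eB n).map Prod.fst then bfSeq r B e eB n
          else bfSeq r B e eB n ++ [(e (n / 2), matchB r B (bfSeq r B e eB n) (e (n / 2)))])
      else
        (if eB (n / 2) ∈ (bfSeq r B e eB n).map Prod.snd then bfSeq r B e eB n
          else bfSeq r B e eB n ++ [(matchA r (bfSeq r B e eB n) (eB (n / 2)), eB (n / 2))]) :=
  rfl

lemma bfSeq_mono {r : D → D → Prop} {B : Set D} {e eB : ℕ → D} {m n : ℕ} (h : m ≤ n) :
    ∀ p ∈ bfSeq r B e eB m, p ∈ bfSeq r B e eB n := by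
  induction n with
  | zero =>
    intro p hp
    exact (Nat.le_zero.1 h) ▸ hp
  | succ n ih =>
    intro p hp
    rcases Nat.lt_or_ge m (n+1) with h' | h'
    · have hp' : p ∈ bfSeq r B e eB n := ih (by omega) p hp
      rw [bfSeq_succ]
      split <;> split <;> first | exact hp' | exact List.mem_append_left _ hp'
    · have : m = n + 1 := le_antisymm h h'
      exact this ▸ hp

def BFInv (r : D → D → Prop) (B : Set D) (l : List (D × D)) : Prop :=
  (l.map Prod.fst).Nodup ∧ (l.map Prod.snd).Nodup ∧ (∀ p ∈ l, p.2 ∈ B) ∧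
    ∀ p ∈ l, ∀ q ∈ l, (r p.1 q.1 ↔ r p.2 q.2)

lemma BFInv.append {r : D → D → Prop} {B : Set D} {l : List (D × D)}
    (hirr : ∀ x, ¬ r x x) (h : BFInv r B l) {x y : D}
    (hx : x ∉ l.map Prod.fst) (hyB : y ∈ B) (hy : y ∉ l.map Prod.snd)
    (hm : ∀ p ∈ l, (r p.1 x ↔ r p.2 y) ∧ (r x p.1 ↔ r y p.2)) :
    BFInv r B (l ++ [(x, y)]) := by
  obtain ⟨h1, h2, h3, h4⟩ := h
  refine ⟨?_, ?_, ?_, ?_⟩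
  · rw [List.map_append, List.nodup_append]
    exact ⟨h1, List.nodup_singleton _, fun a ha b hb hab => hx (by simp only [List.map_cons, List.map_nil, List.mem_singleton] at hb; rw [hab, hb] at ha; exact ha)⟩
  · rw [List.map_append, List.nodup_append]
    exact ⟨h2, List.nodup_singleton _, fun a ha b hb hab => hy (by simp only [List.map_cons, List.map_nil, List.mem_singleton] at hb; rw [hab, hb] at ha; exact ha)⟩
  · intro p hp
    rcases List.mem_append.1 hp with hp | hp
    · exact h3 p hp
    · simp only [List.mem_singleton] at hp; subst hp; exact hyB
  · intro p hp q hq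
    rcases List.mem_append.1 hp with hp | hp <;> rcases List.mem_append.1 hq with hq | hq
    · exact h4 p hp q hq
    · simp only [List.mem_singleton] at hq; subst hq; exact (hm p hp).1
    · simp only [List.mem_singleton] at hp; subst hp; exact (hm q hq).2
    · simp only [List.mem_singleton] at hp hq; subst hp; subst hq
      exact iff_of_false (hirr x) (hirr y)

lemma bfSeq_inv {r : D → D → Prop} {B : Set D} {e eB : ℕ → D}
    (hirr : ∀ x, ¬ r x x) (htr : ∀ x y z, r x y → r y z → r x z)
    (hB : RPSet r B) (huniv : RPSet r univ) (heB : ∀ k, eB k ∈ B) :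
    ∀ n, BFInv r B (bfSeq r B e eB n) := by
  intro n
  induction n with
  | zero => exact ⟨by simp [bfSeq_zero], by simp [bfSeq_zero], by simp [bfSeq_zero],
      by simp [bfSeq_zero]⟩
  | succ n ih =>
    rw [bfSeq_succ]
    split
    · split
      · exact ih
      · rename_i hxf
        have hex := exists_match hirr htr hB (bfSeq r B e eB n) ih.2.2.1 ih.2.1
          (fun p hp q hq => ih.2.2.2 p hp q hq) (e (n / 2))
        have hspec := Classical.epsilon_spec hex
        exact BFInv.append hirr ih hxf hspec.1 hspec.2.1 hspec.2.2
    · split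
      · exact ih
      · rename_i hys
        have hex := exists_match' hirr htr huniv (bfSeq r B e eB n) ih.1
          (fun p hp q hq => ih.2.2.2 p hp q hq) (eB (n / 2))
        have hspec := Classical.epsilon_spec hex
        exact BFInv.append hirr ih hspec.1 (heB _) hys hspec.2

lemma bfSeq_hit_fst {r : D → D → Prop} {B : Set D} {e eB : ℕ → D} (k : ℕ) :
    e k ∈ (bfSeq r B e eB (2 * k + 1)).map Prod.fst := by
  have h0 : (2 * k) % 2 = 0 := by omega
  have h1 : (2 * k) / 2 = k := by omega
  rw [bfSeq_succ, if_pos h0, h1]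
  split
  · assumption
  · simp

lemma bfSeq_hit_snd {r : D → D → Prop} {B : Set D} {e eB : ℕ → D} (k : ℕ) :
    eB k ∈ (bfSeq r B e eB (2 * k + 2)).map Prod.snd := by
  have h0 : (2 * k + 1) % 2 ≠ 0 := by omega
  have h1 : (2 * k + 1) / 2 = k := by omega
  show eB k ∈ (bfSeq r B e eB ((2 * k + 1) + 1)).map Prod.snd
  rw [bfSeq_succ, if_neg h0, h1]
  split
  · assumption
  · simp

end Aux

lemma copy_of_rpset {D : Type*} [Countable D] [Infinite D] {r : D → D → Prop}
    (hrp : IsRandomPosetRel r) {B : Set D} (hB : RPSet r B) : IsCopy r B := by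
  classical
  have huniv : RPSet r univ := rpset_univ hrp
  obtain ⟨hirr, htr, -⟩ := hrp
  obtain ⟨e, he⟩ := exists_surjective_nat D
  have hBne : B.Nonempty := by
    obtain ⟨p, hp, -⟩ := hB ∅ ∅ ∅ (by simp) (by simp) (by simp)
      (by simp) (by simp) (by simp) (by simp) (by simp) (by simp)
    exact ⟨p, hp⟩
  obtain ⟨eB, heBr⟩ := (Set.to_countable B).exists_eq_range hBne
  have heB : ∀ k, eB k ∈ B := fun k => heBr ▸ Set.mem_range_self k
  set S : ℕ → List (D × D) := bfSeq r B e eB with hS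
  have hinv : ∀ n, BFInv r B (S n) := bfSeq_inv hirr htr hB huniv heB
  have hkey : ∀ {m n : ℕ} {p q : D × D}, p ∈ S m → q ∈ S n →
      ((r p.1 q.1 ↔ r p.2 q.2) ∧ (p.1 = q.1 → p = q) ∧ (p.2 = q.2 → p = q)) := by
    intro m n p q hp hq
    have hp' : p ∈ S (max m n) := bfSeq_mono (le_max_left m n) p hp
    have hq' : q ∈ S (max m n) := bfSeq_mono (le_max_right m n) q hq
    obtain ⟨i1, i2, -, i4⟩ := hinv (max m n)
    exact ⟨i4 p hp' q hq',
      fun h => List.inj_on_of_nodup_map i1 hp' hq' h,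
      fun h => List.inj_on_of_nodup_map i2 hp' hq' h⟩
  set f : D → D := fun x => Classical.epsilon fun y => ∃ n, (x, y) ∈ S n with hfdef
  have hf : ∀ x, ∃ n, (x, f x) ∈ S n := by
    intro x
    obtain ⟨k, rfl⟩ := he x
    have := bfSeq_hit_fst (r := r) (B := B) (e := e) (eB := eB) k
    obtain ⟨p, hp, hpk⟩ := List.mem_map.1 this
    have hex : ∃ y, ∃ n, (e k, y) ∈ S n := ⟨p.2, 2 * k + 1, by rwa [← hpk, Prod.mk.eta]⟩
    exact Classical.epsilon_spec hex
  refine ⟨f, ?_, ?_, ?_⟩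
  · intro a b hab
    obtain ⟨m, hm⟩ := hf a
    obtain ⟨n, hn⟩ := hf b
    have := (hkey hm hn).2.2 (by simpa using hab)
    simpa using congrArg Prod.fst this
  · apply Set.Subset.antisymm
    · rintro y ⟨x, rfl⟩
      obtain ⟨n, hn⟩ := hf x
      exact (hinv n).2.2.1 _ hn
    · intro y hy
      have : ∃ k, eB k = y := by
        rw [heBr] at hy; exact hy
      obtain ⟨k, rfl⟩ := this
      have := bfSeq_hit_snd (r := r) (B := B) (e := e) (eB := eB) k
      obtain ⟨p, hp, hpk⟩ := List.mem_map.1 this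
      obtain ⟨n, hn⟩ := hf p.1
      refine ⟨p.1, ?_⟩
      have := (hkey hn hp).1
      have heq : (p.1, f p.1) = p := (hkey hn hp).2.1 rfl
      rw [← hpk]
      exact congrArg Prod.snd heq
  · intro x y
    obtain ⟨m, hm⟩ := hf x
    obtain ⟨n, hn⟩ := hf y
    exact (hkey hm hn).1

theorem statement_12 {D : Type*} [Countable D] [Infinite D] (r : D → D → Prop)
    (hrp : IsRandomPosetRel r) (C : Set D) (hC : ∀ S ⊆ C, ¬ IsCopy r S) :
    IsCopy r (Set.univ \ C) := by
  classical
  obtain ⟨hirr, htr, hep⟩ := id hrp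
  have RW : RPSet r (Set.univ \ C) := by
    intro L G U hLB hGB hUB dLG dLU dGU c1 c2 c3
    by_contra hno
    have hno' : ∀ p, ((∀ l ∈ L, r l p) ∧ (∀ g ∈ G, r p g) ∧
        ∀ u ∈ U, p ≠ u ∧ ¬ r p u ∧ ¬ r u p) → p ∈ C := by
      intro p hp
      by_contra hpc
      exact hno ⟨p, ⟨trivial, hpc⟩, hp⟩
    set W : Set D := {p | (∀ l ∈ L, r l p) ∧ (∀ g ∈ G, r p g) ∧
      ∀ u ∈ U, p ≠ u ∧ ¬ r p u ∧ ¬ r u p} with hWdef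
    have hWC : W ⊆ C := fun p hp => hno' p hp
    have hWL : ∀ w ∈ W, w ∉ L := fun w hw hwL => hirr w (hw.1 w hwL)
    have hWG : ∀ w ∈ W, w ∉ G := fun w hw hwG => hirr w (hw.2.1 w hwG)
    have hWU : ∀ w ∈ W, w ∉ U := fun w hw hwU => (hw.2.2 w hwU).1 rfl
    have hRW : RPSet r W := by
      intro L' G' U' hL' hG' hU' d1 d2 d3 e1 e2 e3
      have d12 : Disjoint (L ∪ L') (G ∪ G') := by
        rw [Finset.disjoint_left]
        intro a ha hb
        rcases Finset.mem_union.1 ha with ha | ha <;> rcases Finset.mem_union.1 hb with hb | hb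
        · exact (Finset.disjoint_left.1 dLG ha) hb
        · exact hWL a (hG' hb) ha
        · exact hWG a (hL' ha) hb
        · exact (Finset.disjoint_left.1 d1 ha) hb
      have d13 : Disjoint (L ∪ L') (U ∪ U') := by
        rw [Finset.disjoint_left]
        intro a ha hb
        rcases Finset.mem_union.1 ha with ha | ha <;> rcases Finset.mem_union.1 hb with hb | hb
        · exact (Finset.disjoint_left.1 dLU ha) hb
        · exact hWL a (hU' hb) ha
        · exact hWU a (hL' ha) hb
        · exact (Finset.disjoint_left.1 d2 ha) hb
      have d23 : Disjoint (G ∪ G') (U ∪ U') := by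
        rw [Finset.disjoint_left]
        intro a ha hb
        rcases Finset.mem_union.1 ha with ha | ha <;> rcases Finset.mem_union.1 hb with hb | hb
        · exact (Finset.disjoint_left.1 dGU ha) hb
        · exact hWG a (hU' hb) ha
        · exact hWU a (hG' ha) hb
        · exact (Finset.disjoint_left.1 d3 ha) hb
      have f1 : ∀ l ∈ L ∪ L', ∀ g ∈ G ∪ G', r l g := by
        intro l hl g hg
        rcases Finset.mem_union.1 hl with hl | hl <;> rcases Finset.mem_union.1 hg with hg | hg
        · exact c1 l hl g hg
        · exact (hG' hg).1 l hl
        · exact (hL' hl).2.1 g hg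
        · exact e1 l hl g hg
      have f2 : ∀ u ∈ U ∪ U', ∀ l ∈ L ∪ L', ¬ r u l := by
        intro u hu l hl hr
        rcases Finset.mem_union.1 hu with hu | hu <;> rcases Finset.mem_union.1 hl with hl | hl
        · exact c2 u hu l hl hr
        · exact ((hL' hl).2.2 u hu).2.2 hr
        · exact hirr u (htr _ _ _ hr ((hU' hu).1 l hl))
        · exact e2 u hu l hl hr
      have f3 : ∀ u ∈ U ∪ U', ∀ g ∈ G ∪ G', ¬ r g u := by
        intro u hu g hg hr
        rcases Finset.mem_union.1 hu with hu | hu <;> rcases Finset.mem_union.1 hg with hg | hg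
        · exact c3 u hu g hg hr
        · exact ((hG' hg).2.2 u hu).2.1 hr
        · exact hirr u (htr _ _ _ ((hU' hu).2.1 g hg) hr)
        · exact e3 u hu g hg hr
      obtain ⟨p, pL, pG, pU, h4, h5, h6⟩ := hep (L ∪ L') (G ∪ G') (U ∪ U') d12 d13 d23 f1 f2 f3
      have hpW : p ∈ W := ⟨fun l hl => h4 l (Finset.mem_union_left _ hl),
        fun g hg => h5 g (Finset.mem_union_left _ hg),
        fun u hu => h6 u (Finset.mem_union_left _ hu)⟩
      exact ⟨p, hpW, fun l hl => h4 l (Finset.mem_union_right _ hl),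
        fun g hg => h5 g (Finset.mem_union_right _ hg),
        fun u hu => h6 u (Finset.mem_union_right _ hu)⟩
    exact hC W hWC (copy_of_rpset hrp hRW)
  exact copy_of_rpset hrp RW
end

section
/- Let A ⊆ B ⊆ ℕ and let L be a complete linear order such that the cardinality of B \ A equals the cardinality of L minus one (i.e., if L is finite of size n+1 then |B \ A| = n, and if B \ A is infinite then L is countably infinite). Then there is a family ℒ of sets with A ∈ ℒ, B ∈ ℒ, A ⊆ C ⊆ B for all C ∈ ℒ, ℒ linearly ordered by ⊆ and order-isomorphic to L, and such that for each cut ⟨𝒜, ℬ⟩ of ℒ (a partition of ℒ into nonempty sets 𝒜, ℬ with every member of 𝒜 a proper subset of every member of ℬ) one has ⋃𝒜 ∈ ℒ, ⋂ℬ ∈ ℒ, and |⋂ℬ \ ⋃𝒜| ≤ 1. -/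
open Set

lemma denseJumps_of_countable {L : Type*} [LinearOrder L] [Countable L]
    (hcomp : CompleteLO L) : DenseJumps L := by
  intro x y hxy
  by_contra hno
  push_neg at hno
  have : Nonempty L := ⟨x⟩
  obtain ⟨u, hu⟩ := exists_surjective_nat L
  have step : ∀ (q : {p : L × L // x ≤ p.1 ∧ p.1 < p.2 ∧ p.2 ≤ y}) (z : L),
      ∃ q' : {p : L × L // x ≤ p.1 ∧ p.1 < p.2 ∧ p.2 ≤ y},
        q.1.1 < q'.1.1 ∧ q'.1.2 < q.1.2 ∧ (z < q'.1.1 ∨ q'.1.2 < z) := by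
    rintro ⟨⟨a, b⟩, hxa, hab, hby⟩ z
    obtain ⟨m, ham, hmb⟩ := hno a b hxa hab hby
    rcases le_or_gt z m with hz | hz
    · obtain ⟨a', hma', ha'b⟩ := hno m b (hxa.trans ham.le) hmb hby
      obtain ⟨b', h1, h2⟩ := hno a' b (hxa.trans (ham.trans hma').le) ha'b hby
      exact ⟨⟨(a', b'), hxa.trans (ham.trans hma').le, h1, h2.le.trans hby⟩,
        ham.trans hma', h2, Or.inl (hz.trans_lt hma')⟩
    · obtain ⟨a', haa', ha'm⟩ := hno a m hxa ham (hmb.le.trans hby)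
      obtain ⟨b', h1, h2⟩ := hno a' m (hxa.trans haa'.le) ha'm (hmb.le.trans hby)
      exact ⟨⟨(a', b'), hxa.trans haa'.le, h1, ((h2.trans hmb).le.trans hby)⟩,
        haa', h2.trans hmb, Or.inr (h2.trans hz)⟩
  let g : ℕ → {p : L × L // x ≤ p.1 ∧ p.1 < p.2 ∧ p.2 ≤ y} := fun n =>
    Nat.rec ⟨(x, y), le_refl x, hxy, le_refl y⟩ (fun n q => (step q (u n)).choose) n
  set a : ℕ → L := fun n => (g n).1.1 with ha_def
  set b : ℕ → L := fun n => (g n).1.2 with hb_def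
  have hstep : ∀ n, a n < a (n + 1) ∧ b (n + 1) < b n ∧ (u n < a (n + 1) ∨ b (n + 1) < u n) :=
    fun n => (step (g n) (u n)).choose_spec
  have ha : StrictMono a := strictMono_nat_of_lt_succ fun n => (hstep n).1
  have hb : Antitone b := antitone_nat_of_succ_le fun n => (hstep n).2.1.le
  have hab : ∀ n m, a n < b m := fun n m =>
    lt_of_le_of_lt (ha.monotone (le_max_left n m))
      (lt_of_lt_of_le (g (max n m)).2.2.1 (hb (le_max_right n m)))
  obtain ⟨s, hs⟩ := (hcomp (Set.range a)).1
  have hsa : ∀ n, a n ≤ s := fun n => hs.1 (Set.mem_range_self n)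
  have hsb : ∀ n, s ≤ b n := fun n => hs.2 (fun z hz => by
    obtain ⟨k, rfl⟩ := hz; exact (hab k n).le)
  obtain ⟨n, hn⟩ := hu s
  rcases (hstep n).2.2 with h | h
  · exact absurd (hn ▸ h) (not_lt.2 (hsa (n + 1)))
  · exact absurd (hn ▸ h) (not_lt.2 (hsb (n + 1)))

theorem statement_14 (A B : Set ℕ) (hAB : A ⊆ B) (L : Type*) [LinearOrder L]
    (hcomp : CompleteLO L)
    (hcard : ((B \ A).Finite ∧ Finite L ∧ Nat.card L = (B \ A).ncard + 1) ∨
             ((B \ A).Infinite ∧ Countable L ∧ Infinite L)) :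
    ∃ 𝓛 : Set (Set ℕ), A ∈ 𝓛 ∧ B ∈ 𝓛 ∧ (∀ C ∈ 𝓛, A ⊆ C ∧ C ⊆ B) ∧
      IsChain (· ⊆ ·) 𝓛 ∧ Nonempty (L ≃o ↥𝓛) ∧
      ∀ 𝒜 ℬ : Set (Set ℕ), 𝒜.Nonempty → ℬ.Nonempty → 𝒜 ∪ ℬ = 𝓛 → 𝒜 ∩ ℬ = ∅ →
        (∀ A' ∈ 𝒜, ∀ B' ∈ ℬ, A' ⊂ B') →
        ⋃₀ 𝒜 ∈ 𝓛 ∧ ⋂₀ ℬ ∈ 𝓛 ∧ (⋂₀ ℬ \ ⋃₀ 𝒜).Subsingleton := by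
  classical
  haveI hcount : Countable L := by
    rcases hcard with ⟨_, hfin, _⟩ | ⟨_, hc, _⟩
    · exact @Finite.to_countable L hfin
    · exact hc
  have hdj : DenseJumps L := denseJumps_of_countable hcomp
  obtain ⟨z0, hz0⟩ : ∃ z : L, IsBot z := by
    obtain ⟨b, hb⟩ := (hcomp Set.univ).2
    exact ⟨b, fun x => hb.1 (Set.mem_univ x)⟩
  obtain ⟨z1, hz1⟩ : ∃ z : L, IsTop z := by
    obtain ⟨b, hb⟩ := (hcomp Set.univ).1
    exact ⟨b, fun x => hb.1 (Set.mem_univ x)⟩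
  set T : Set L := {t | ∃ a, a ⋖ t} with hT
  have hTjump : ∀ x y : L, x < y → ∃ t ∈ T, x < t ∧ t ≤ y := by
    intro x y h
    obtain ⟨a, b, hxa, hab, hby, hnb⟩ := hdj x y h
    exact ⟨b, ⟨a, hab, fun c hc1 hc2 => hnb c ⟨hc1, hc2⟩⟩, hxa.trans_lt hab, hby⟩
  have hz0T : z0 ∉ T := fun ⟨a, ha⟩ => absurd (hz0 a) (not_le.2 ha.1)
  obtain ⟨e⟩ : Nonempty (↥T ≃ ↥(B \ A)) := by
    rcases hcard with ⟨hfinD, hfinL, hcardL⟩ | ⟨hinfD, _, hinfL⟩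
    · haveI : Finite L := hfinL
      haveI : Finite ↥(B \ A) := hfinD.to_subtype
      have hTeq : T = {z0}ᶜ := by
        ext z
        simp only [Set.mem_compl_iff, Set.mem_singleton_iff]
        constructor
        · rintro hz rfl; exact hz0T hz
        · intro hz
          have hne : {c | c < z}.Nonempty := ⟨z0, (hz0 z).lt_of_ne (Ne.symm hz)⟩
          obtain ⟨m, hm, hmax⟩ :=
            Set.Finite.exists_maximalFor id _ (Set.toFinite _) hne
          exact ⟨m, hm, fun c hc1 hc2 => absurd (hmax hc2 hc1.le) (not_le.2 hc1)⟩
      have h1 : Nat.card ↥T = (B \ A).ncard := by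
        rw [Nat.card_coe_set_eq, hTeq]
        have h2 : ({z0} : Set L).ncard + ({z0} : Set L)ᶜ.ncard = Nat.card L := by
          rw [← Set.ncard_univ, ← Set.ncard_union_eq disjoint_compl_right
            (Set.toFinite _) (Set.toFinite _), Set.union_compl_self]
        rw [Set.ncard_singleton] at h2
        omega
      exact Finite.card_eq.mp (by rw [h1, Nat.card_coe_set_eq])
    · haveI : Infinite ↥T := by
        rw [Set.infinite_coe_iff]
        by_contra hfin
        haveI : Finite ↥T := (Set.not_infinite.mp hfin).to_subtype
        have hg : StrictMono (fun l : L => {t : ↥T | (t : L) ≤ l}) := by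
          intro x y hxy
          refine lt_of_le_of_ne (fun t ht => le_trans ht hxy.le) ?_
          intro heq
          simp only [Set.ext_iff, Set.mem_setOf_eq] at heq
          obtain ⟨t, htT, hxt, hty⟩ := hTjump x y hxy
          exact absurd ((heq ⟨t, htT⟩).2 hty) (not_le.2 hxt)
        haveI : Finite L := Finite.of_injective _ hg.injective
        exact not_finite L
      haveI : Infinite ↥(B \ A) := hinfD.to_subtype
      exact nonempty_equiv_of_countable
  set ι : ↥T → ℕ := fun t => ((e t : ℕ)) with hι
  have hιinj : Function.Injective ι := fun t₁ t₂ h => e.injective (Subtype.ext h)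
  have hιmem : ∀ t, ι t ∈ B \ A := fun t => (e t).2
  set f : L → Set ℕ := fun l => A ∪ ι '' {t : ↥T | (t : L) ≤ l} with hf
  have hfA : ∀ l, A ⊆ f l := fun l => Set.subset_union_left
  have hfB : ∀ l, f l ⊆ B := by
    rintro l n (h | ⟨t, _, rfl⟩)
    · exact hAB h
    · exact (hιmem t).1
  have hmono : ∀ {x y : L}, x ≤ y → f x ⊆ f y := by
    intro x y h
    exact Set.union_subset_union_right _ (Set.image_mono fun t ht => le_trans ht h)
  have hmem_iff : ∀ {n : ℕ} {l : L}, n ∈ f l → n ∉ A → ∃ t : ↥T, ι t = n ∧ (t : L) ≤ l := by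
    rintro n l (h | ⟨t, ht, rfl⟩) hnA
    · exact absurd h hnA
    · exact ⟨t, rfl, ht⟩
  have hnotmem : ∀ (t : ↥T) (l : L), ¬ (t : L) ≤ l → ι t ∉ f l := by
    intro t l hle h
    obtain ⟨t', h1, h2⟩ := hmem_iff h (hιmem t).2
    exact hle ((hιinj h1) ▸ h2)
  have hstrict : StrictMono f := by
    intro x y hxy
    obtain ⟨t, htT, hxt, hty⟩ := hTjump x y hxy
    refine lt_of_le_of_ne (hmono hxy.le) ?_
    intro heq
    have h1 : ι ⟨t, htT⟩ ∈ f y := Set.mem_union_right _ ⟨⟨t, htT⟩, hty, rfl⟩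
    exact hnotmem ⟨t, htT⟩ x (not_le.2 hxt) (heq ▸ h1)
  have hfz0 : f z0 = A := by
    apply subset_antisymm _ (hfA z0)
    rintro n (h | ⟨t, ht, rfl⟩)
    · exact h
    · exact absurd ((le_antisymm ht (hz0 _)) ▸ t.2) hz0T
  have hfz1 : f z1 = B := by
    apply subset_antisymm (hfB z1)
    intro n hn
    by_cases hnA : n ∈ A
    · exact Set.mem_union_left _ hnA
    · refine Set.mem_union_right _ ⟨e.symm ⟨n, hn, hnA⟩, hz1 _, ?_⟩
      show ((e (e.symm ⟨n, hn, hnA⟩) : ↥(B \ A)) : ℕ) = n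
      rw [Equiv.apply_symm_apply]
  refine ⟨Set.range f, ⟨z0, hfz0⟩, ⟨z1, hfz1⟩, ?_, ?_, ⟨hstrict.orderIso f⟩, ?_⟩
  · rintro C ⟨l, rfl⟩; exact ⟨hfA l, hfB l⟩
  · rintro _ ⟨x, rfl⟩ _ ⟨y, rfl⟩ _
    rcases le_total x y with h | h
    · exact Or.inl (hmono h)
    · exact Or.inr (hmono h)
  · intro 𝒜 ℬ h𝒜 hℬ hun hdis hlt
    set P : Set L := f ⁻¹' 𝒜 with hP
    set Q : Set L := f ⁻¹' ℬ with hQ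
    have h𝒜r : 𝒜 ⊆ Set.range f := hun ▸ Set.subset_union_left
    have hℬr : ℬ ⊆ Set.range f := hun ▸ Set.subset_union_right
    have him𝒜 : f '' P = 𝒜 := Set.image_preimage_eq_of_subset h𝒜r
    have himℬ : f '' Q = ℬ := Set.image_preimage_eq_of_subset hℬr
    have hPne : P.Nonempty := by
      obtain ⟨a, ha⟩ := h𝒜
      obtain ⟨p, rfl⟩ := h𝒜r ha
      exact ⟨p, ha⟩
    have hQne : Q.Nonempty := by
      obtain ⟨a, ha⟩ := hℬ
      obtain ⟨q, rfl⟩ := hℬr ha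
      exact ⟨q, ha⟩
    have hPQ : ∀ p ∈ P, ∀ q ∈ Q, p < q := by
      intro p hp q hq
      by_contra h
      exact (hlt _ hp _ hq).2 (hmono (not_lt.1 h))
    have hPQ_cover : ∀ l : L, l ∈ P ∨ l ∈ Q := by
      intro l
      have h1 : f l ∈ 𝒜 ∪ ℬ := hun ▸ Set.mem_range_self l
      exact h1
    obtain ⟨s, hs⟩ := (hcomp P).1
    obtain ⟨i, hi⟩ := (hcomp Q).2
    have hsi : s ≤ i := hi.2 (fun q hq => hs.2 (fun p hp => (hPQ p hp q hq).le))
    have hInter : ⋂₀ ℬ = f i := by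
      apply subset_antisymm
      · intro n hn
        obtain ⟨q0, hq0⟩ := hQne
        have hnq0 : n ∈ f q0 := hn (f q0) (by rw [← himℬ]; exact ⟨q0, hq0, rfl⟩)
        by_cases hnA : n ∈ A
        · exact Set.mem_union_left _ hnA
        · obtain ⟨t, htn, _⟩ := hmem_iff hnq0 hnA
          have hlb : (t : L) ∈ lowerBounds Q := by
            intro q hq
            have hnq : n ∈ f q := hn (f q) (by rw [← himℬ]; exact ⟨q, hq, rfl⟩)
            obtain ⟨t', ht'n, ht'⟩ := hmem_iff hnq hnA
            rwa [hιinj (ht'n.trans htn.symm)] at ht'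
          exact Set.mem_union_right _ ⟨t, hi.2 hlb, htn⟩
      · intro n hn C hC
        have hC' : C ∈ f '' Q := by rw [himℬ]; exact hC
        obtain ⟨q, hq, rfl⟩ := hC'
        exact hmono (hi.1 hq) hn
    have key : ∃ w : L, ⋃₀ 𝒜 = f w ∧ w ≤ i ∧ ∀ c, w < c → ¬ c < i := by
      have hUsub : ∀ p ∈ P, f p ⊆ ⋃₀ 𝒜 := fun p hp =>
        Set.subset_sUnion_of_mem (by rw [← him𝒜]; exact ⟨p, hp, rfl⟩)
      have hUsup : ∀ w : L, (∀ p ∈ P, p ≤ w) → ⋃₀ 𝒜 ⊆ f w := by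
        intro w hw n hn
        obtain ⟨C, hC, hnC⟩ := hn
        have hC' : C ∈ f '' P := by rw [him𝒜]; exact hC
        obtain ⟨p, hp, rfl⟩ := hC'
        exact hmono (hw p hp) hnC
      by_cases hsP : s ∈ P
      · refine ⟨s, subset_antisymm (hUsup s fun p hp => hs.1 hp) (hUsub s hsP),
          hi.2 fun q hq => (hPQ s hsP q hq).le, ?_⟩
        intro c hsc hci
        rcases hPQ_cover c with h | h
        · exact absurd (hs.1 h) (not_le.2 hsc)
        · exact absurd (hi.1 h) (not_le.2 hci)
      · have hsQ : s ∈ Q := (hPQ_cover s).resolve_left hsP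
        have hsieq : s = i := le_antisymm hsi (hi.1 hsQ)
        by_cases hsT : s ∈ T
        · obtain ⟨a, ha⟩ := hsT
          have haP : a ∈ P := by
            rcases hPQ_cover a with h | h
            · exact h
            · exact absurd (hi.1 h) (not_le.2 (hsieq ▸ ha.1))
          refine ⟨a, subset_antisymm (hUsup a ?_) (hUsub a haP), hsieq ▸ ha.1.le, ?_⟩
          · intro p hp
            by_contra hap
            exact ha.2 (not_le.1 hap) (hPQ p hp s hsQ)
          · intro c hac hci
            exact ha.2 hac (hsieq ▸ hci)
        · refine ⟨s, subset_antisymm (hUsup s fun p hp => hs.1 hp) ?_, hsi, ?_⟩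
          · rintro n (h | ⟨t, ht, rfl⟩)
            · obtain ⟨p0, hp0⟩ := hPne
              exact hUsub p0 hp0 (hfA p0 h)
            · have hts : (t : L) < s := lt_of_le_of_ne ht (fun h => hsT (h ▸ t.2))
              obtain ⟨p, hp, htp⟩ : ∃ p ∈ P, (t : L) ≤ p := by
                by_contra h
                push_neg at h
                have : s ≤ (t : L) := hs.2 fun p hp => (h p hp).le
                exact absurd this (not_le.2 hts)
              exact hUsub p hp (Set.mem_union_right _ ⟨t, htp, rfl⟩)
          · intro c hsc hci
            exact absurd (hsc.trans hci) (hsieq ▸ lt_irrefl s)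
    obtain ⟨w, hw, hwi, hgap⟩ := key
    refine ⟨by rw [hw]; exact Set.mem_range_self w,
      by rw [hInter]; exact Set.mem_range_self i, ?_⟩
    rw [hw, hInter]
    have ht : ∀ n, n ∈ f i \ f w → ∃ t : ↥T, ι t = n ∧ (t : L) = i := by
      rintro n ⟨hni, hnw⟩
      have hnA : n ∉ A := fun h => hnw (hfA w h)
      obtain ⟨t, htn, hti⟩ := hmem_iff hni hnA
      refine ⟨t, htn, ?_⟩
      have hwt : w < (t : L) :=
        not_le.1 fun h => hnw (htn ▸ Set.mem_union_right _ ⟨t, h, rfl⟩)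
      exact le_antisymm hti (not_lt.1 (hgap _ hwt))
    intro n₁ hn₁ n₂ hn₂
    obtain ⟨t₁, h1, h1'⟩ := ht n₁ hn₁
    obtain ⟨t₂, h2, h2'⟩ := ht n₂ hn₂
    have : t₁ = t₂ := Subtype.ext (h1'.trans h2'.symm)
    rw [← h1, ← h2, this]
end
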